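/- arXiv:1909.03238 — 9 statements merged into one kernel-verified Lean document; each statement's English description precedes it below -/
import Mathlib

section
/- Let (A, m) be a σ-finite measure space, (Ω, P) a probability space, and G : A × Ω → ℝ a jointly measurable family of random variables such that for every t ∈ A the random variable G_t is centered Gaussian with standard deviation σ_t, where t ↦ σ_t is measurable. Set C = ∫_A σ_t m(dt). If C < ∞, then E exp(∫_A |G_t| m(dt)) ≤ e^{C²/2} · (2/√(2π)) ∫_{-∞}^{C} e^{-u²/2} du ≤ exp(√(2/π) C + C²/2). -/
open MeasureTheory ProbabilityTheory Real Set Nat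
open scoped NNReal ENNReal

lemma lintegral_pi_prod {A : Type*} [MeasurableSpace A] (m : Measure A) [SigmaFinite m]
    (h : A → ℝ≥0∞) (hm : Measurable h) (n : ℕ) :
    ∫⁻ x : Fin n → A, ∏ i, h (x i) ∂(Measure.pi fun _ => m) = (∫⁻ t, h t ∂m) ^ n := by
  induction n with
  | zero => simp [lintegral_const, Measure.pi_univ]
  | succ n ih =>
    have hmp := measurePreserving_piFinSuccAbove (fun _ : Fin (n + 1) => m) 0
    have hmeas : Measurable (fun p : A × (Fin n → A) => h p.1 * ∏ j, h (p.2 j)) := by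
      apply Measurable.mul (hm.comp measurable_fst)
      exact Finset.measurable_prod _ fun j _ => hm.comp ((measurable_pi_apply j).comp measurable_snd)
    calc ∫⁻ x : Fin (n+1) → A, ∏ i, h (x i) ∂(Measure.pi fun _ => m)
        = ∫⁻ x : Fin (n+1) → A, (fun p : A × (Fin n → A) => h p.1 * ∏ j, h (p.2 j))
            ((MeasurableEquiv.piFinSuccAbove (fun _ => A) 0) x) ∂(Measure.pi fun _ => m) := by
          refine lintegral_congr fun x => ?_
          simp [MeasurableEquiv.piFinSuccAbove, Fin.prod_univ_succ, Fin.succAbove, Fin.tail]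
      _ = ∫⁻ p : A × (Fin n → A), h p.1 * ∏ j, h (p.2 j) ∂(m.prod (Measure.pi fun _ => m)) :=
          hmp.lintegral_comp hmeas
      _ = (∫⁻ t, h t ∂m) ^ (n + 1) := by
          rw [MeasureTheory.lintegral_prod _ hmeas.aemeasurable]
          have hpm : Measurable fun y : Fin n → A => ∏ j, h (y j) :=
            Finset.measurable_prod _ fun j _ => hm.comp (measurable_pi_apply j)
          have h1 : ∀ a : A, ∫⁻ y : Fin n → A, h a * ∏ j, h (y j) ∂(Measure.pi fun _ => m)
              = h a * (∫⁻ t, h t ∂m) ^ n := fun a => by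
            rw [lintegral_const_mul _ hpm, ih]
          simp only [h1, lintegral_mul_const _ hm, pow_succ]
          ring

lemma minkowski_pow {A : Type*} [MeasurableSpace A] (m : Measure A) [SigmaFinite m]
    {Ω : Type*} [MeasurableSpace Ω] (P : Measure Ω) [SFinite P]
    (f : A → Ω → ℝ≥0∞) (hf : Measurable (Function.uncurry f)) (n : ℕ) (hn : n ≠ 0) :
    ∫⁻ ω, (∫⁻ t, f t ω ∂m) ^ n ∂P
      ≤ (∫⁻ t, (∫⁻ ω, f t ω ^ n ∂P) ^ ((n : ℝ)⁻¹) ∂m) ^ n := by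
  have hnR : (n : ℝ) ≠ 0 := Nat.cast_ne_zero.mpr hn
  have hfo : ∀ ω, Measurable fun t => f t ω := fun ω =>
    hf.comp (measurable_id.prodMk measurable_const)
  have hft : ∀ t, Measurable (f t) := fun t =>
    hf.comp (measurable_const.prodMk measurable_id)
  have hprod : Measurable (Function.uncurry fun (ω : Ω) (x : Fin n → A) => ∏ i, f (x i) ω) := by
    apply Finset.measurable_prod
    intro i _
    have : Measurable fun a : Ω × (Fin n → A) => Function.uncurry f (a.2 i, a.1) :=
      hf.comp (((measurable_pi_apply i).comp measurable_snd).prodMk measurable_fst)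
    exact this
  calc ∫⁻ ω, (∫⁻ t, f t ω ∂m) ^ n ∂P
      = ∫⁻ ω, ∫⁻ x : Fin n → A, ∏ i, f (x i) ω ∂(Measure.pi fun _ => m) ∂P := by
        refine lintegral_congr fun ω => ?_
        rw [lintegral_pi_prod m _ (hfo ω) n]
    _ = ∫⁻ x : Fin n → A, ∫⁻ ω, ∏ i, f (x i) ω ∂P ∂(Measure.pi fun _ => m) :=
        lintegral_lintegral_swap hprod.aemeasurable
    _ ≤ ∫⁻ x : Fin n → A, ∏ i, (∫⁻ ω, f (x i) ω ^ n ∂P) ^ ((n : ℝ)⁻¹)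
          ∂(Measure.pi fun _ => m) := by
        refine lintegral_mono fun x => ?_
        have := ENNReal.lintegral_prod_norm_pow_le (μ := P) (Finset.univ : Finset (Fin n))
          (f := fun i ω => f (x i) ω ^ n) (fun i _ => ((hft (x i)).pow_const n).aemeasurable)
          (p := fun _ => (n : ℝ)⁻¹) (by simp [hnR]) (fun i _ => by positivity)
        refine le_trans (le_of_eq ?_) (this.trans (le_of_eq ?_))
        · refine lintegral_congr fun ω => ?_
          refine (Finset.prod_congr rfl fun i _ => ?_).symm
          show (f (x i) ω ^ n) ^ ((n : ℝ)⁻¹) = f (x i) ω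
          rw [← ENNReal.rpow_natCast (f (x i) ω) n, ← ENNReal.rpow_mul,
            mul_inv_cancel₀ hnR, ENNReal.rpow_one]
        · rfl
    _ = (∫⁻ t, (∫⁻ ω, f t ω ^ n ∂P) ^ ((n : ℝ)⁻¹) ∂m) ^ n := by
        rw [← lintegral_pi_prod m (fun t => (∫⁻ ω, f t ω ^ n ∂P) ^ ((n : ℝ)⁻¹))
          ((Measurable.lintegral_prod_right (f := fun t ω => f t ω ^ n)
            (hf.pow_const n)).pow_const _) n]

lemma gaussian_scale (σ : ℝ≥0) :
    gaussianReal 0 (σ ^ 2) = (gaussianReal 0 1).map (fun y => (σ : ℝ) * y) := by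
  rw [gaussianReal_map_const_mul (σ : ℝ)]
  congr 1
  · simp
  · ext
    push_cast
    ring

lemma lintegral_nnnorm_pow_gaussian (σ : ℝ≥0) (n : ℕ) :
    ∫⁻ y, (‖y‖₊ : ℝ≥0∞) ^ n ∂(gaussianReal 0 (σ ^ 2))
      = (σ : ℝ≥0∞) ^ n * ∫⁻ y, (‖y‖₊ : ℝ≥0∞) ^ n ∂(gaussianReal 0 1) := by
  rw [gaussian_scale, lintegral_map (by fun_prop) (by fun_prop)]
  rw [← lintegral_const_mul _ (by fun_prop)]
  refine lintegral_congr fun y => ?_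
  rw [nnnorm_mul, ← mul_pow]
  push_cast
  congr 2
  simp [Real.nnnorm_of_nonneg σ.2]

lemma integrable_gauss : Integrable (fun u : ℝ => rexp (-u ^ 2 / 2)) := by
  have h : (fun u : ℝ => rexp (-u ^ 2 / 2)) = fun u => rexp (-(1 / 2 : ℝ) * u ^ 2) := by
    funext u; ring_nf
  rw [h]; exact integrable_exp_neg_mul_sq (by norm_num)

lemma integral_gauss : ∫ u : ℝ, rexp (-u ^ 2 / 2) = Real.sqrt (2 * π) := by
  have h : (fun u : ℝ => rexp (-u ^ 2 / 2)) = fun u => rexp (-(1 / 2 : ℝ) * u ^ 2) := by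
    funext u; ring_nf
  rw [h, integral_gaussian]
  rw [show π / (1/2 : ℝ) = 2 * π by ring]

lemma integral_gauss_Ioi_zero : ∫ u in Ioi (0 : ℝ), rexp (-u ^ 2 / 2) = Real.sqrt (2 * π) / 2 := by
  have habs := integral_comp_abs (f := fun u : ℝ => rexp (-u ^ 2 / 2))
  simp only [sq_abs] at habs
  rw [integral_gauss] at habs
  linarith

lemma integral_gauss_Iic_zero : ∫ u in Iic (0 : ℝ), rexp (-u ^ 2 / 2) = Real.sqrt (2 * π) / 2 := by
  have h := integral_comp_neg_Iic (0 : ℝ) (fun u : ℝ => rexp (-u ^ 2 / 2))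
  simp only [neg_sq, neg_zero] at h
  rw [h, integral_gauss_Ioi_zero]

lemma integral_gauss_translate (C : ℝ) :
    ∫ x in Ioi (0 : ℝ), rexp (-(x - C) ^ 2 / 2) = ∫ u in Iic C, rexp (-u ^ 2 / 2) := by
  have mp : MeasurePreserving (fun x : ℝ => x + -C) volume volume :=
    measurePreserving_add_right volume (-C)
  have me : MeasurableEmbedding (fun x : ℝ => x + -C) :=
    (Homeomorph.addRight (-C)).measurableEmbedding
  have h1 := mp.setIntegral_preimage_emb me (fun y => rexp (-y ^ 2 / 2)) (Ioi (-C))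
  rw [show (fun x : ℝ => x + -C) ⁻¹' (Ioi (-C)) = Ioi 0 by ext x; simp] at h1
  have h2 := integral_comp_neg_Iic C (fun u : ℝ => rexp (-u ^ 2 / 2))
  simp only [neg_sq] at h2
  rw [← h2] at h1
  rw [← h1]
  refine setIntegral_congr_fun measurableSet_Ioi fun x _ => ?_
  ring_nf

lemma integrable_gauss_translate (C : ℝ) :
    Integrable (fun x : ℝ => rexp (-(x - C) ^ 2 / 2)) := by
  have := integrable_gauss.comp_sub_right C
  simpa using this

lemma gaussianPDFReal_mul_exp (C y : ℝ) :
    gaussianPDFReal 0 1 y * rexp (C * |y|)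
      = (Real.sqrt (2 * π))⁻¹ * rexp (C * |y| - y ^ 2 / 2) := by
  simp only [gaussianPDFReal, NNReal.coe_one, mul_one, sub_zero]
  rw [mul_assoc, ← Real.exp_add]
  ring_nf

lemma integrable_pdf_mul_exp (C : ℝ) :
    Integrable (fun y => gaussianPDFReal 0 1 y * rexp (C * |y|)) := by
  have hbound : Integrable (fun y : ℝ => (Real.sqrt (2 * π))⁻¹ * rexp (C ^ 2 / 2) *
      (rexp (-(y - C) ^ 2 / 2) + rexp (-(y + C) ^ 2 / 2))) := by
    refine Integrable.const_mul ?_ _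
    have h2 : Integrable (fun x : ℝ => rexp (-(x + C) ^ 2 / 2)) := by
      have := (integrable_gauss_translate (-C)).2
      refine ⟨?_, by simpa [sub_neg_eq_add] using this⟩
      exact (Real.continuous_exp.comp (by continuity)).aestronglyMeasurable
    exact (integrable_gauss_translate C).add h2
  refine Integrable.mono' hbound ?_ ?_
  · exact ((measurable_gaussianPDFReal 0 1).mul
      (Real.continuous_exp.comp (continuous_const.mul continuous_abs)).measurable).aestronglyMeasurable
  · refine Filter.Eventually.of_forall fun y => ?_
    rw [Real.norm_eq_abs, abs_of_nonneg (mul_nonneg (gaussianPDFReal_nonneg _ _ _) (exp_nonneg _)),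
      gaussianPDFReal_mul_exp]
    have hsqrt : 0 < Real.sqrt (2 * π) := Real.sqrt_pos.mpr (by positivity)
    rcases le_or_gt 0 y with hy | hy
    · have h1 : C * |y| - y ^ 2 / 2 = C ^ 2 / 2 + (-(y - C) ^ 2 / 2) := by
        rw [abs_of_nonneg hy]; ring
      rw [h1, Real.exp_add]
      have := exp_nonneg (-(y + C) ^ 2 / 2)
      calc (Real.sqrt (2 * π))⁻¹ * (rexp (C ^ 2 / 2) * rexp (-(y - C) ^ 2 / 2))
          ≤ (Real.sqrt (2 * π))⁻¹ * (rexp (C ^ 2 / 2) *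
            (rexp (-(y - C) ^ 2 / 2) + rexp (-(y + C) ^ 2 / 2))) := by
            apply mul_le_mul_of_nonneg_left _ (by positivity)
            apply mul_le_mul_of_nonneg_left _ (exp_nonneg _)
            linarith
        _ = (Real.sqrt (2 * π))⁻¹ * rexp (C ^ 2 / 2) *
            (rexp (-(y - C) ^ 2 / 2) + rexp (-(y + C) ^ 2 / 2)) := by ring
    · have h1 : C * |y| - y ^ 2 / 2 = C ^ 2 / 2 + (-(y + C) ^ 2 / 2) := by
        rw [abs_of_neg hy]; ring
      rw [h1, Real.exp_add]
      have := exp_nonneg (-(y - C) ^ 2 / 2)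
      calc (Real.sqrt (2 * π))⁻¹ * (rexp (C ^ 2 / 2) * rexp (-(y + C) ^ 2 / 2))
          ≤ (Real.sqrt (2 * π))⁻¹ * (rexp (C ^ 2 / 2) *
            (rexp (-(y - C) ^ 2 / 2) + rexp (-(y + C) ^ 2 / 2))) := by
            apply mul_le_mul_of_nonneg_left _ (by positivity)
            apply mul_le_mul_of_nonneg_left _ (exp_nonneg _)
            linarith
        _ = (Real.sqrt (2 * π))⁻¹ * rexp (C ^ 2 / 2) *
            (rexp (-(y - C) ^ 2 / 2) + rexp (-(y + C) ^ 2 / 2)) := by ring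

lemma lintegral_exp_mul_abs_gaussian (C : ℝ) :
    ∫⁻ y, ENNReal.ofReal (rexp (C * |y|)) ∂(gaussianReal 0 1)
      = ENNReal.ofReal (rexp (C ^ 2 / 2) * (2 / Real.sqrt (2 * π)) *
          ∫ u in Iic C, rexp (-u ^ 2 / 2)) := by
  have hg : Measurable fun y : ℝ => ENNReal.ofReal (rexp (C * |y|)) :=
    (Real.continuous_exp.comp (continuous_const.mul continuous_abs)).measurable.ennreal_ofReal
  rw [gaussianReal_of_var_ne_zero 0 one_ne_zero,
    lintegral_withDensity_eq_lintegral_mul _ (measurable_gaussianPDF 0 1) hg]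
  have h2 : ((gaussianPDF 0 1) * fun y => ENNReal.ofReal (rexp (C * |y|)))
      = fun y => ENNReal.ofReal (gaussianPDFReal 0 1 y * rexp (C * |y|)) := by
    funext y
    simp only [Pi.mul_apply, gaussianPDF]
    rw [← ENNReal.ofReal_mul (gaussianPDFReal_nonneg _ _ _)]
  rw [h2, ← ofReal_integral_eq_lintegral_ofReal (integrable_pdf_mul_exp C)
    (Filter.Eventually.of_forall fun y => mul_nonneg (gaussianPDFReal_nonneg _ _ _)
      (exp_nonneg _))]
  congr 1
  have h3 : (fun y : ℝ => gaussianPDFReal 0 1 y * rexp (C * |y|))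
      = fun y => (fun u => (Real.sqrt (2 * π))⁻¹ * rexp (C * u - u ^ 2 / 2)) |y| := by
    funext y
    rw [gaussianPDFReal_mul_exp]
    simp [sq_abs]
  have habs := integral_comp_abs (f := fun u => (Real.sqrt (2 * π))⁻¹ * rexp (C * u - u ^ 2 / 2))
  rw [h3, habs]
  have h4 : ∀ x : ℝ, (Real.sqrt (2 * π))⁻¹ * rexp (C * x - x ^ 2 / 2)
      = (Real.sqrt (2 * π))⁻¹ * rexp (C ^ 2 / 2) * rexp (-(x - C) ^ 2 / 2) := fun x => by
    rw [mul_assoc, ← Real.exp_add]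
    ring_nf
  simp_rw [h4]
  rw [integral_const_mul, integral_gauss_translate C]
  ring

lemma part2 (C : ℝ) (hC : 0 ≤ C) :
    rexp (C ^ 2 / 2) * (2 / Real.sqrt (2 * π)) * (∫ u in Iic C, rexp (-u ^ 2 / 2))
      ≤ rexp (Real.sqrt (2 / π) * C + C ^ 2 / 2) := by
  have hπ : (0 : ℝ) < π := Real.pi_pos
  have hs2π : (0 : ℝ) < Real.sqrt (2 * π) := Real.sqrt_pos.mpr (by positivity)
  have hsq : (2 : ℝ) / Real.sqrt (2 * π) = Real.sqrt (2 / π) := by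
    have hmul : Real.sqrt (2 / π) * Real.sqrt (2 * π) = 2 := by
      rw [← Real.sqrt_mul (by positivity) (2 * π),
        show (2 / π) * (2 * π) = 2 ^ 2 by field_simp,
        Real.sqrt_sq (by norm_num : (0:ℝ) ≤ 2)]
    rw [div_eq_iff hs2π.ne']
    exact hmul.symm
  have hsplit : ∫ u in Iic C, rexp (-u ^ 2 / 2)
      = (∫ u in Iic (0:ℝ), rexp (-u ^ 2 / 2)) + ∫ u in Ioc 0 C, rexp (-u ^ 2 / 2) := by
    rw [← setIntegral_union (Set.Iic_disjoint_Ioc le_rfl) measurableSet_Ioc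
      integrable_gauss.integrableOn integrable_gauss.integrableOn,
      Set.Iic_union_Ioc_eq_Iic hC]
  have hIoc : ∫ u in Ioc (0:ℝ) C, rexp (-u ^ 2 / 2) ≤ C := by
    calc ∫ u in Ioc (0:ℝ) C, rexp (-u ^ 2 / 2) ≤ ∫ _u in Ioc (0:ℝ) C, (1:ℝ) := by
          refine setIntegral_mono_on integrable_gauss.integrableOn
            (integrableOn_const measure_Ioc_lt_top.ne) measurableSet_Ioc fun x _ => ?_
          show rexp (-x ^ 2 / 2) ≤ (1:ℝ)
          rw [Real.exp_le_one_iff]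
          have : (0:ℝ) ≤ x ^ 2 := sq_nonneg x
          linarith
      _ = C := by
          simp [Real.volume_Ioc, ENNReal.toReal_ofReal hC, hC]
  have key : (2 / Real.sqrt (2 * π)) * (∫ u in Iic C, rexp (-u ^ 2 / 2))
      ≤ 1 + Real.sqrt (2 / π) * C := by
    calc (2 / Real.sqrt (2 * π)) * (∫ u in Iic C, rexp (-u ^ 2 / 2))
        ≤ (2 / Real.sqrt (2 * π)) * (Real.sqrt (2 * π) / 2 + C) := by
          apply mul_le_mul_of_nonneg_left _ (by positivity)
          rw [hsplit, integral_gauss_Iic_zero]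
          linarith
      _ = 1 + Real.sqrt (2 / π) * C := by
          rw [← hsq]
          field_simp
  calc rexp (C ^ 2 / 2) * (2 / Real.sqrt (2 * π)) * (∫ u in Iic C, rexp (-u ^ 2 / 2))
      ≤ rexp (C ^ 2 / 2) * (1 + Real.sqrt (2 / π) * C) := by
        rw [mul_assoc]
        exact mul_le_mul_of_nonneg_left key (exp_nonneg _)
    _ ≤ rexp (C ^ 2 / 2) * rexp (Real.sqrt (2 / π) * C) := by
        refine mul_le_mul_of_nonneg_left ?_ (exp_nonneg _)
        have := Real.add_one_le_exp (Real.sqrt (2 / π) * C)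
        linarith
    _ = rexp (Real.sqrt (2 / π) * C + C ^ 2 / 2) := by
        rw [← Real.exp_add, add_comm]

lemma exp_tsum_real (x : ℝ) : rexp x = ∑' n : ℕ, x ^ n / n ! := by
  rw [Real.exp_eq_exp_ℝ, NormedSpace.exp_eq_tsum_div]

lemma ofReal_exp_eq (x : ℝ) (hx : 0 ≤ x) :
    ENNReal.ofReal (rexp x) = ∑' n : ℕ, ENNReal.ofReal x ^ n * (n ! : ℝ≥0∞)⁻¹ := by
  rw [exp_tsum_real, ENNReal.ofReal_tsum_of_nonneg (fun n => by positivity)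
    (Real.summable_pow_div_factorial x)]
  refine tsum_congr fun n => ?_
  rw [ENNReal.ofReal_div_of_pos (by positivity), ENNReal.ofReal_pow hx, div_eq_mul_inv,
    ENNReal.ofReal_natCast]

lemma ofReal_exp_toReal_le (b : ℝ≥0∞) :
    ENNReal.ofReal (rexp b.toReal) ≤ ∑' n : ℕ, b ^ n * (n ! : ℝ≥0∞)⁻¹ := by
  rw [ofReal_exp_eq _ ENNReal.toReal_nonneg]
  refine ENNReal.tsum_le_tsum fun n => ?_
  exact mul_le_mul_left (pow_le_pow_left' ENNReal.ofReal_toReal_le n) _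

/-- Let `(A, m)` be a σ-finite measure space, `(Ω, P)` a probability space,
and `G : A × Ω → ℝ` a jointly measurable family of random variables such that for every `t ∈ A`
the random variable `G t` is centered Gaussian with standard deviation `σ t`, where `σ` is
measurable.  Set `C = ∫_A σ_t m(dt)`.  If `C < ∞` (i.e. `σ` is integrable), then
`E exp (∫_A |G_t| m(dt)) ≤ e^{C²/2} ⬝ (2/√(2π)) ∫_{-∞}^C e^{-u²/2} du
  ≤ exp (√(2/π) C + C²/2)`. -/
theorem stmt0
    {A : Type*} [MeasurableSpace A] (m : Measure A) [SigmaFinite m]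
    {Ω : Type*} [MeasurableSpace Ω] (P : Measure Ω) [IsProbabilityMeasure P]
    (G : A → Ω → ℝ) (hG : Measurable (Function.uncurry G))
    (σ : A → ℝ≥0) (hσ : Measurable σ)
    (hGauss : ∀ t, P.map (G t) = gaussianReal 0 (σ t ^ 2))
    (hint : Integrable (fun t => (σ t : ℝ)) m)
    (C : ℝ) (hC : C = ∫ t, (σ t : ℝ) ∂m) :
    (∫⁻ ω, ENNReal.ofReal (Real.exp (∫ t, |G t ω| ∂m)) ∂P)
      ≤ ENNReal.ofReal (Real.exp (C ^ 2 / 2) * (2 / Real.sqrt (2 * π)) *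
          ∫ u in Set.Iic C, Real.exp (-u ^ 2 / 2)) ∧
    Real.exp (C ^ 2 / 2) * (2 / Real.sqrt (2 * π)) * (∫ u in Set.Iic C, Real.exp (-u ^ 2 / 2))
      ≤ Real.exp (Real.sqrt (2 / π) * C + C ^ 2 / 2) := by
  have hC0 : 0 ≤ C := hC ▸ integral_nonneg fun t => (σ t).2
  refine ⟨?_, part2 C hC0⟩
  set oC := ENNReal.ofReal C with hoCdef
  set M : ℕ → ℝ≥0∞ := fun n => ∫⁻ y, (‖y‖₊ : ℝ≥0∞) ^ n ∂(gaussianReal 0 1) with hM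
  set F : Ω → ℝ≥0∞ := fun ω => ∫⁻ t, (‖G t ω‖₊ : ℝ≥0∞) ∂m with hFdef
  -- measurability facts
  have hGm : ∀ t, Measurable (G t) := fun t =>
    hG.comp (measurable_const.prodMk measurable_id)
  have hswap : Measurable fun p : Ω × A => (‖G p.2 p.1‖₊ : ℝ≥0∞) :=
    (hG.comp (measurable_snd.prodMk measurable_fst)).enorm
  have hF : Measurable F := by
    have : Measurable (Function.uncurry fun (ω : Ω) (t : A) => (‖G t ω‖₊ : ℝ≥0∞)) := hswap
    exact Measurable.lintegral_prod_right (f := fun (ω : Ω) (t : A) => (‖G t ω‖₊ : ℝ≥0∞)) this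
  have hunc : Measurable (Function.uncurry fun (t : A) (ω : Ω) => (‖G t ω‖₊ : ℝ≥0∞)) :=
    hG.enorm
  have hnn : Measurable fun y : ℝ => (‖y‖₊ : ℝ≥0∞) := measurable_nnnorm.coe_nnreal_ennreal
  -- the total mass
  have hoC : ∫⁻ t, ((σ t : ℝ≥0) : ℝ≥0∞) ∂m = oC := by
    rw [hoCdef, hC, ofReal_integral_eq_lintegral_ofReal hint
      (Filter.Eventually.of_forall fun t => (σ t).2)]
    exact lintegral_congr fun t => ENNReal.ofReal_coe_nnreal.symm
  -- moments of each G t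
  have hMom : ∀ (t : A) (n : ℕ),
      ∫⁻ ω, (‖G t ω‖₊ : ℝ≥0∞) ^ n ∂P = ((σ t : ℝ≥0) : ℝ≥0∞) ^ n * M n := fun t n => by
    rw [← lintegral_map (hnn.pow_const n) (hGm t), hGauss t,
      lintegral_nnnorm_pow_gaussian (σ t) n]
  -- the key moment bound
  have hFn : ∀ n : ℕ, ∫⁻ ω, F ω ^ n ∂P ≤ oC ^ n * M n := by
    intro n
    rcases Nat.eq_zero_or_pos n with h0 | hpos
    · subst h0
      simp only [pow_zero, one_mul, lintegral_one, measure_univ, hM]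
      simp [lintegral_one, measure_univ]
    · have hnR : (n : ℝ) ≠ 0 := Nat.cast_ne_zero.mpr hpos.ne'
      have hmink := minkowski_pow m P (fun t ω => (‖G t ω‖₊ : ℝ≥0∞)) hunc n hpos.ne'
      refine hmink.trans (le_of_eq ?_)
      have hpt : ∀ t : A, (∫⁻ ω, (‖G t ω‖₊ : ℝ≥0∞) ^ n ∂P) ^ ((n : ℝ)⁻¹)
          = ((σ t : ℝ≥0) : ℝ≥0∞) * (M n) ^ ((n : ℝ)⁻¹) := fun t => by
        rw [hMom t n, ENNReal.mul_rpow_of_nonneg _ _ (by positivity)]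
        congr 1
        rw [← ENNReal.rpow_natCast ((σ t : ℝ≥0) : ℝ≥0∞) n, ← ENNReal.rpow_mul,
          mul_inv_cancel₀ hnR, ENNReal.rpow_one]
      rw [lintegral_congr hpt, lintegral_mul_const _ hσ.coe_nnreal_ennreal, hoC, mul_pow]
      congr 1
      rw [← ENNReal.rpow_natCast ((M n) ^ ((n : ℝ)⁻¹)) n, ← ENNReal.rpow_mul,
        inv_mul_cancel₀ hnR, ENNReal.rpow_one]
  -- the sum of the bounds is the Gaussian mgf
  have hsum : (∫⁻ y, ENNReal.ofReal (rexp (C * |y|)) ∂(gaussianReal 0 1))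
      = ∑' n : ℕ, (n ! : ℝ≥0∞)⁻¹ * (oC ^ n * M n) := by
    have hpt : ∀ y : ℝ, ENNReal.ofReal (rexp (C * |y|))
        = ∑' n : ℕ, ((n ! : ℝ≥0∞)⁻¹ * oC ^ n) * (‖y‖₊ : ℝ≥0∞) ^ n := fun y => by
      rw [ofReal_exp_eq _ (mul_nonneg hC0 (abs_nonneg y))]
      refine tsum_congr fun n => ?_
      rw [ENNReal.ofReal_mul hC0, ← Real.enorm_eq_ofReal_abs, enorm_eq_nnnorm, mul_pow]
      ring
    calc ∫⁻ y, ENNReal.ofReal (rexp (C * |y|)) ∂(gaussianReal 0 1)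
        = ∫⁻ y, ∑' n : ℕ, ((n ! : ℝ≥0∞)⁻¹ * oC ^ n) * (‖y‖₊ : ℝ≥0∞) ^ n
            ∂(gaussianReal 0 1) := lintegral_congr hpt
      _ = ∑' n : ℕ, ∫⁻ y, ((n ! : ℝ≥0∞)⁻¹ * oC ^ n) * (‖y‖₊ : ℝ≥0∞) ^ n
            ∂(gaussianReal 0 1) :=
          lintegral_tsum fun n => (((hnn.pow_const n)).const_mul _).aemeasurable
      _ = ∑' n : ℕ, (n ! : ℝ≥0∞)⁻¹ * (oC ^ n * M n) := by
          refine tsum_congr fun n => ?_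
          rw [lintegral_const_mul _ (hnn.pow_const n), mul_assoc]
  -- main chain
  calc ∫⁻ ω, ENNReal.ofReal (rexp (∫ t, |G t ω| ∂m)) ∂P
      = ∫⁻ ω, ENNReal.ofReal (rexp ((F ω).toReal)) ∂P := by
        refine lintegral_congr fun ω => ?_
        congr 2
        have hma : AEStronglyMeasurable (fun t => |G t ω|) m :=
          ((hG.comp (measurable_id.prodMk measurable_const)).abs).aestronglyMeasurable
        rw [integral_eq_lintegral_of_nonneg_ae
          (Filter.Eventually.of_forall fun t => abs_nonneg _) hma]
        congr 1
        exact lintegral_congr fun t => (Real.enorm_eq_ofReal_abs _).symm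
    _ ≤ ∫⁻ ω, ∑' n : ℕ, F ω ^ n * (n ! : ℝ≥0∞)⁻¹ ∂P :=
        lintegral_mono fun ω => ofReal_exp_toReal_le _
    _ = ∑' n : ℕ, ∫⁻ ω, F ω ^ n * (n ! : ℝ≥0∞)⁻¹ ∂P :=
        lintegral_tsum fun n => ((hF.pow_const n).mul_const _).aemeasurable
    _ = ∑' n : ℕ, (n ! : ℝ≥0∞)⁻¹ * ∫⁻ ω, F ω ^ n ∂P := by
        refine tsum_congr fun n => ?_
        rw [lintegral_mul_const _ (hF.pow_const n), mul_comm]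
    _ ≤ ∑' n : ℕ, (n ! : ℝ≥0∞)⁻¹ * (oC ^ n * M n) :=
        ENNReal.tsum_le_tsum fun n => mul_le_mul_right (hFn n) _
    _ = ∫⁻ y, ENNReal.ofReal (rexp (C * |y|)) ∂(gaussianReal 0 1) := hsum.symm
    _ = ENNReal.ofReal (Real.exp (C ^ 2 / 2) * (2 / Real.sqrt (2 * π)) *
          ∫ u in Set.Iic C, Real.exp (-u ^ 2 / 2)) := lintegral_exp_mul_abs_gaussian C
end

section
/- Let (A, m) be a σ-finite measure space, (Ω, P) a probability space, δ ∈ (0,2), and G : A × Ω → ℝ a jointly measurable family of random variables such that for every t ∈ A the random variable G_t is centered Gaussian with standard deviation σ_t, where t ↦ σ_t is measurable. Set C = ∫_A σ_t^δ m(dt). If C < ∞, then E exp(∫_A |G_t|^δ m(dt)) ≤ ∫_ℝ exp(C|u|^δ) γ_ℝ(du). -/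
open MeasureTheory ProbabilityTheory Real
open scoped NNReal ENNReal

/-- Let `(A, m)` be a σ-finite measure space, `(Ω, P)` a probability space,
`δ ∈ (0,2)`, and `G` a jointly measurable family of random variables such that each `G t`
is centered Gaussian with standard deviation `σ t`, `σ` measurable.
Set `C = ∫_A σ_t^δ m(dt)`.  If `C < ∞` (i.e. `σ^δ` is integrable), then
`E exp (∫_A |G_t|^δ m(dt)) ≤ ∫_ℝ exp (C |u|^δ) γ_ℝ(du)`. -/
theorem stmt1
    {A : Type*} [MeasurableSpace A] (m : Measure A) [SigmaFinite m]
    {Ω : Type*} [MeasurableSpace Ω] (P : Measure Ω) [IsProbabilityMeasure P]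
    (δ : ℝ) (hδ : δ ∈ Set.Ioo (0 : ℝ) 2)
    (G : A → Ω → ℝ) (hG : Measurable (Function.uncurry G))
    (σ : A → ℝ≥0) (hσ : Measurable σ)
    (hGauss : ∀ t, P.map (G t) = gaussianReal 0 (σ t ^ 2))
    (hint : Integrable (fun t => (σ t : ℝ) ^ δ) m)
    (C : ℝ) (hC : C = ∫ t, (σ t : ℝ) ^ δ ∂m) :
    (∫⁻ ω, ENNReal.ofReal (Real.exp (∫ t, |G t ω| ^ δ ∂m)) ∂P)
      ≤ ∫⁻ u, ENNReal.ofReal (Real.exp (C * |u| ^ δ)) ∂(gaussianReal 0 1) := by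
  obtain ⟨hδ0, hδ2⟩ := hδ
  have hrpow : Measurable fun x : ℝ => x ^ δ := (Real.continuous_rpow_const hδ0.le).measurable
  have hGt : ∀ ω, Measurable fun t => G t ω :=
    fun ω => hG.comp (measurable_id.prodMk measurable_const)
  have hGω : ∀ t, Measurable (G t) :=
    fun t => hG.comp (measurable_const.prodMk measurable_id)
  have hCnn : 0 ≤ C := hC ▸ integral_nonneg fun t => Real.rpow_nonneg (σ t).coe_nonneg δ
  -- each t with σ t = 0 has G t = 0 a.s.
  have hzero : ∀ t, σ t = 0 → ∀ᵐ ω ∂P, G t ω = 0 := by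
    intro t ht
    have h1 : P.map (G t) = Measure.dirac 0 := by
      rw [hGauss t, ht]; simp [gaussianReal_zero_var]
    have h2 : P {ω | G t ω ≠ 0} = 0 := by
      have := Measure.map_apply (μ := P) (hGω t) (MeasurableSet.compl (measurableSet_singleton (0:ℝ)))
      rw [h1] at this
      exact (by simpa [Measure.dirac_apply' _ (MeasurableSet.compl (measurableSet_singleton (0:ℝ)))]
        using this.symm : P (G t ⁻¹' {0})ᶜ = 0)
    exact h2
  have hmeas_imp : MeasurableSet {x : A × Ω | σ x.1 = 0 → G x.1 x.2 = 0} := by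
    have : {x : A × Ω | σ x.1 = 0 → G x.1 x.2 = 0}
        = {x : A × Ω | σ x.1 = 0}ᶜ ∪ {x : A × Ω | G x.1 x.2 = 0} := by
      ext x; simp [imp_iff_not_or]
    rw [this]
    exact (((hσ.comp measurable_fst) (measurableSet_singleton 0)).compl).union
      (hG (measurableSet_singleton (0:ℝ)))
  have hswap : ∀ᵐ ω ∂P, ∀ᵐ t ∂m, σ t = 0 → G t ω = 0 := by
    rw [← Measure.ae_ae_comm hmeas_imp]
    exact ae_of_all _ fun t => by
      by_cases ht : σ t = 0
      · filter_upwards [hzero t ht] with ω hω _ using hω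
      · exact ae_of_all _ fun ω h => absurd h ht
  by_cases hC0 : C = 0
  · -- degenerate case: σ = 0 a.e., both sides equal 1
    have hσ0 : ∀ᵐ t ∂m, σ t = 0 := by
      have h0 : ∫ t, (σ t : ℝ) ^ δ ∂m = 0 := by rw [← hC, hC0]
      have h1 := (integral_eq_zero_iff_of_nonneg
        (fun t => Real.rpow_nonneg (σ t).coe_nonneg δ) hint).1 h0
      filter_upwards [h1] with t ht
      have : (σ t : ℝ) = 0 :=
        ((Real.rpow_eq_zero_iff_of_nonneg (σ t).coe_nonneg).1 ht).1
      exact_mod_cast this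
    have hL : ∀ᵐ ω ∂P, ENNReal.ofReal (Real.exp (∫ t, |G t ω| ^ δ ∂m)) = 1 := by
      filter_upwards [hswap] with ω hω
      have hz : ∫ t, |G t ω| ^ δ ∂m = 0 := by
        apply integral_eq_zero_of_ae
        filter_upwards [hω, hσ0] with t h1 h2
        simp [h1 h2, Real.zero_rpow (ne_of_gt hδ0)]
      simp [hz, Real.exp_zero]
    have hLeq : (∫⁻ ω, ENNReal.ofReal (Real.exp (∫ t, |G t ω| ^ δ ∂m)) ∂P) = 1 := by
      rw [lintegral_congr_ae hL]; simp
    rw [hLeq, hC0]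
    simp
  -- main case: C > 0
  have hCpos : 0 < C := lt_of_le_of_ne hCnn (Ne.symm hC0)
  set ν := gaussianReal 0 1 with hν
  set d : A → ℝ≥0 := fun t => Real.toNNReal ((σ t : ℝ) ^ δ / C) with hd
  have hdmeas : Measurable d := ((hrpow.comp hσ.coe_nnreal_real).div_const C).real_toNNReal
  set μ := m.withDensity (fun t => (d t : ℝ≥0∞)) with hμ
  have hcoe : ∀ t, ((d t : ℝ≥0) : ℝ≥0∞) = ENNReal.ofReal ((σ t : ℝ) ^ δ / C) := fun t => rfl
  have hdiv_int : Integrable (fun t => (σ t : ℝ) ^ δ / C) m := hint.div_const C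
  have hdiv_nn : 0 ≤ᵐ[m] fun t => (σ t : ℝ) ^ δ / C :=
    ae_of_all _ fun t => div_nonneg (Real.rpow_nonneg (σ t).coe_nonneg δ) hCnn
  have hμuniv : μ Set.univ = 1 := by
    rw [hμ, withDensity_apply _ MeasurableSet.univ, Measure.restrict_univ]
    have h1 : ∫⁻ t, ((d t : ℝ≥0) : ℝ≥0∞) ∂m
        = ENNReal.ofReal (∫ t, (σ t : ℝ) ^ δ / C ∂m) := by
      simp_rw [hcoe]
      exact (ofReal_integral_eq_lintegral_ofReal hdiv_int hdiv_nn).symm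
    rw [h1, integral_div, ← hC, div_self hC0]
    simp
  haveI hμprob : IsProbabilityMeasure μ := ⟨hμuniv⟩
  set f : A → Ω → ℝ := fun t ω => C * (|G t ω| / (σ t : ℝ)) ^ δ with hf
  have hfnn : ∀ t ω, 0 ≤ f t ω := fun t ω =>
    mul_nonneg hCnn (Real.rpow_nonneg (div_nonneg (abs_nonneg _) (σ t).coe_nonneg) δ)
  have hft : ∀ ω, Measurable fun t => f t ω := fun ω =>
    ((hrpow.comp ((hGt ω).abs.div hσ.coe_nnreal_real))).const_mul C
  -- key pointwise inequality
  have key : ∀ᵐ ω ∂P, ENNReal.ofReal (Real.exp (∫ t, |G t ω| ^ δ ∂m))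
      ≤ ∫⁻ t, ENNReal.ofReal (Real.exp (f t ω)) ∂μ := by
    filter_upwards [hswap] with ω hω
    have hrel : (fun t => f t ω * ((d t : ℝ≥0∞)).toReal) =ᵐ[m] fun t => |G t ω| ^ δ := by
      filter_upwards [hω] with t ht
      have hdr : (((d t : ℝ≥0) : ℝ≥0∞)).toReal = (σ t : ℝ) ^ δ / C := by
        rw [ENNReal.coe_toReal, hd]
        exact Real.coe_toNNReal _ (div_nonneg (Real.rpow_nonneg (σ t).coe_nonneg δ) hCnn)
      rw [hdr]
      by_cases hs : σ t = 0
      · rw [ht hs, hs]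
        simp [Real.zero_rpow (ne_of_gt hδ0)]
      · have hσpos : (0 : ℝ) < σ t := by positivity
        have hσδ : (0 : ℝ) < (σ t : ℝ) ^ δ := Real.rpow_pos_of_pos hσpos δ
        show C * (|G t ω| / (σ t : ℝ)) ^ δ * ((σ t : ℝ) ^ δ / C) = |G t ω| ^ δ
        rw [Real.div_rpow (abs_nonneg _) (σ t).coe_nonneg]
        field_simp
    by_cases hI : Integrable (fun t => |G t ω| ^ δ) m
    · have hfint : Integrable (fun t => f t ω) μ := by
        rw [hμ, integrable_withDensity_iff hdmeas.coe_nnreal_ennreal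
          (ae_of_all _ fun t => ENNReal.coe_lt_top)]
        exact hI.congr hrel.symm
      have hIμ : ∫ t, f t ω ∂μ = ∫ t, |G t ω| ^ δ ∂m := by
        rw [hμ, integral_withDensity_eq_integral_smul hdmeas]
        refine integral_congr_ae ?_
        filter_upwards [hrel] with t ht
        rw [← ht]
        simp [NNReal.smul_def, mul_comm]
      rcases eq_top_or_lt_top (∫⁻ t, ENNReal.ofReal (Real.exp (f t ω)) ∂μ) with h | h
      · rw [h]; exact le_top
      · have hexpmeas : Measurable fun t => Real.exp (f t ω) :=
          Real.measurable_exp.comp (hft ω)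
        have hexpint : Integrable (fun t => Real.exp (f t ω)) μ :=
          ⟨hexpmeas.aestronglyMeasurable,
            (hasFiniteIntegral_iff_ofReal (ae_of_all _ fun t => (Real.exp_pos _).le)).2 h⟩
        have hjensen : Real.exp (∫ t, f t ω ∂μ) ≤ ∫ t, Real.exp (f t ω) ∂μ :=
          convexOn_exp.map_integral_le continuous_exp.continuousOn isClosed_univ
            (ae_of_all _ fun t => Set.mem_univ _) hfint hexpint
        rw [hIμ] at hjensen
        calc ENNReal.ofReal (Real.exp (∫ t, |G t ω| ^ δ ∂m))
            ≤ ENNReal.ofReal (∫ t, Real.exp (f t ω) ∂μ) := ENNReal.ofReal_le_ofReal hjensen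
          _ = ∫⁻ t, ENNReal.ofReal (Real.exp (f t ω)) ∂μ :=
              ofReal_integral_eq_lintegral_ofReal hexpint
                (ae_of_all _ fun t => (Real.exp_pos _).le)
    · rw [integral_undef hI, Real.exp_zero, ENNReal.ofReal_one]
      calc (1 : ℝ≥0∞) = ∫⁻ _, 1 ∂μ := by simp
        _ ≤ ∫⁻ t, ENNReal.ofReal (Real.exp (f t ω)) ∂μ := by
            refine lintegral_mono fun t => ?_
            rw [ENNReal.one_le_ofReal]
            exact Real.one_le_exp (hfnn t ω)
  -- μ-a.e. σ t ≠ 0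
  have hμae : ∀ᵐ t ∂μ, σ t ≠ 0 := by
    rw [ae_iff]
    have hset : {t | ¬ σ t ≠ 0} = {t | σ t = 0} := by ext t; simp
    have hms : MeasurableSet {t : A | σ t = 0} := hσ (measurableSet_singleton 0)
    rw [hset, hμ, withDensity_apply _ hms]
    have hzz : ∫⁻ a in {t | σ t = 0}, ((d a : ℝ≥0) : ℝ≥0∞) ∂m
        = ∫⁻ _ in {t | σ t = 0}, 0 ∂m := by
      refine setLIntegral_congr_fun hms (fun t ht => ?_)
      have hts : σ t = 0 := ht
      rw [hcoe t, hts]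
      simp [Real.zero_rpow (ne_of_gt hδ0)]
    rw [hzz]
    simp
  -- measurability on the product
  have hprod : Measurable fun z : Ω × A => ENNReal.ofReal (Real.exp (f z.2 z.1)) := by
    have h1 : Measurable fun z : Ω × A => G z.2 z.1 := hG.comp measurable_swap
    exact ENNReal.measurable_ofReal.comp (Real.measurable_exp.comp
      ((hrpow.comp (h1.abs.div ((hσ.comp measurable_snd).coe_nnreal_real))).const_mul C))
  have hφ : Measurable fun u : ℝ => ENNReal.ofReal (Real.exp (C * |u| ^ δ)) :=
    ENNReal.measurable_ofReal.comp
      (Real.measurable_exp.comp ((hrpow.comp measurable_abs).const_mul C))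
  -- inner identity
  have inner_eq : ∀ᵐ t ∂μ, (∫⁻ ω, ENNReal.ofReal (Real.exp (f t ω)) ∂P)
      = ∫⁻ u, ENNReal.ofReal (Real.exp (C * |u| ^ δ)) ∂ν := by
    filter_upwards [hμae] with t ht
    have hsne : (σ t : ℝ) ≠ 0 := by exact_mod_cast ht
    set c : ℝ := ((σ t : ℝ))⁻¹ with hc
    have hmap : P.map (fun ω => c * G t ω) = ν := by
      have hcomp : (fun ω => c * G t ω) = (fun x => c * x) ∘ G t := rfl
      rw [hcomp, ← Measure.map_map (measurable_const_mul c) (hGω t), hGauss t,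
        gaussianReal_map_const_mul, hν]
      congr 1
      · exact mul_zero c
      · apply NNReal.coe_injective
        push_cast
        rw [hc]
        field_simp
    have habs : ∀ ω, f t ω = C * |c * G t ω| ^ δ := fun ω => by
      rw [hf, abs_mul, hc, abs_inv, abs_of_nonneg (σ t).coe_nonneg, inv_mul_eq_div]
    calc (∫⁻ ω, ENNReal.ofReal (Real.exp (f t ω)) ∂P)
        = ∫⁻ ω, ENNReal.ofReal (Real.exp (C * |c * G t ω| ^ δ)) ∂P := by
          simp_rw [habs]
      _ = ∫⁻ u, ENNReal.ofReal (Real.exp (C * |u| ^ δ))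
            ∂(P.map (fun ω => c * G t ω)) :=
          (lintegral_map hφ ((hGω t).const_mul c)).symm
      _ = ∫⁻ u, ENNReal.ofReal (Real.exp (C * |u| ^ δ)) ∂ν := by rw [hmap]
  calc (∫⁻ ω, ENNReal.ofReal (Real.exp (∫ t, |G t ω| ^ δ ∂m)) ∂P)
      ≤ ∫⁻ ω, (∫⁻ t, ENNReal.ofReal (Real.exp (f t ω)) ∂μ) ∂P := lintegral_mono_ae key
    _ = ∫⁻ t, (∫⁻ ω, ENNReal.ofReal (Real.exp (f t ω)) ∂P) ∂μ :=
        lintegral_lintegral_swap hprod.aemeasurable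
    _ = ∫⁻ t, (∫⁻ u, ENNReal.ofReal (Real.exp (C * |u| ^ δ)) ∂ν) ∂μ :=
        lintegral_congr_ae inner_eq
    _ = ∫⁻ u, ENNReal.ofReal (Real.exp (C * |u| ^ δ)) ∂ν := by
        rw [lintegral_const, measure_univ, mul_one]
end

section
/- Let (A, m) be a σ-finite measure space, (Ω, P) a probability space, and ξ, η : A × Ω → ℝ two jointly measurable families of random variables (defined on the same probability space, possibly dependent) such that for every t ∈ A the random variables ξ_t and η_t are centered Gaussian with standard deviations σ_t and δ_t respectively, where t ↦ σ_t and t ↦ δ_t are measurable. Set C = ∫_A (σ_t + δ_t) m(dt). If C < ∞, then E exp(∫_A (|ξ_t| + |η_t|) m(dt)) ≤ e^{C²/2} · (2/√(2π)) ∫_{-∞}^{C} e^{-u²/2} du ≤ exp(√(2/π) C + C²/2). -/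
open MeasureTheory ProbabilityTheory Real
open scoped NNReal ENNReal

noncomputable def Kfun (C : ℝ) : ℝ :=
  Real.exp (C ^ 2 / 2) * (2 / Real.sqrt (2 * π)) * ∫ u in Set.Iic C, Real.exp (-u ^ 2 / 2)

lemma aux_sqrt : Real.sqrt (2 / π) * Real.sqrt (2 * π) = 2 := by
  rw [← Real.sqrt_mul (by positivity)]
  have : 2 / π * (2 * π) = 4 := by field_simp; ring
  rw [this, show (4:ℝ) = 2 ^ 2 by norm_num, Real.sqrt_sq (by norm_num)]

lemma exp_gauss_integrable : Integrable (fun u : ℝ => Real.exp (-u ^ 2 / 2)) := by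
  have := integrable_exp_neg_mul_sq (by norm_num : (0:ℝ) < 1/2)
  convert this using 2 with u
  ring_nf

lemma aux_Iic0 : ∫ u in Set.Iic (0:ℝ), Real.exp (-u ^ 2 / 2) = Real.sqrt (2 * π) / 2 := by
  have h := integral_comp_neg_Iic (0:ℝ) (fun u => Real.exp (-u ^ 2 / 2))
  simp only [neg_zero, neg_sq] at h
  rw [h]
  have h2 := integral_gaussian_Ioi (1/2 : ℝ)
  have : ∀ x : ℝ, Real.exp (-(1/2) * x ^ 2) = Real.exp (-x ^ 2 / 2) := by
    intro x; ring_nf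
  simp only [this] at h2
  rw [h2]
  congr 1
  rw [show π / (1/2 : ℝ) = 2 * π by ring]

lemma aux_part2 (C : ℝ) (hC : 0 ≤ C) :
    Real.exp (C ^ 2 / 2) * (2 / Real.sqrt (2 * π)) * (∫ u in Set.Iic C, Real.exp (-u ^ 2 / 2))
      ≤ Real.exp (Real.sqrt (2 / π) * C + C ^ 2 / 2) := by
  have hsπ : 0 < Real.sqrt (2 * π) := Real.sqrt_pos.2 (by positivity)
  have hI : (∫ u in Set.Iic C, Real.exp (-u ^ 2 / 2)) ≤ Real.sqrt (2 * π) / 2 + C := by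
    have hsub := intervalIntegral.integral_Iic_sub_Iic
      (exp_gauss_integrable.integrableOn (s := Set.Iic 0))
      (exp_gauss_integrable.integrableOn (s := Set.Iic C))
    have hbound : (∫ u in (0:ℝ)..C, Real.exp (-u ^ 2 / 2)) ≤ C := by
      calc (∫ u in (0:ℝ)..C, Real.exp (-u ^ 2 / 2)) ≤ ∫ _ in (0:ℝ)..C, (1:ℝ) := by
            apply intervalIntegral.integral_mono_on hC
              exp_gauss_integrable.intervalIntegrable (intervalIntegrable_const)
            intro x _
            calc Real.exp (-x ^ 2 / 2) ≤ Real.exp 0 := Real.exp_le_exp.2 (by nlinarith [sq_nonneg x])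
              _ = 1 := Real.exp_zero
        _ = C := by simp
    rw [aux_Iic0] at hsub
    linarith
  have key : (2 / Real.sqrt (2 * π)) * (∫ u in Set.Iic C, Real.exp (-u ^ 2 / 2))
      ≤ Real.exp (Real.sqrt (2 / π) * C) := by
    have h1 : (2 / Real.sqrt (2 * π)) * (∫ u in Set.Iic C, Real.exp (-u ^ 2 / 2))
        ≤ (2 / Real.sqrt (2 * π)) * (Real.sqrt (2 * π) / 2 + C) := by
      apply mul_le_mul_of_nonneg_left hI (by positivity)
    have h2 : (2 / Real.sqrt (2 * π)) * (Real.sqrt (2 * π) / 2 + C)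
        = 1 + Real.sqrt (2 / π) * C := by
      have h3 : (2 : ℝ) / Real.sqrt (2 * π) = Real.sqrt (2 / π) := by
        rw [div_eq_iff hsπ.ne', aux_sqrt]
      rw [mul_add, ← h3]
      have h4 : (2 / Real.sqrt (2 * π)) * (Real.sqrt (2 * π) / 2) = 1 := by
        field_simp
      rw [h4]
    calc (2 / Real.sqrt (2 * π)) * (∫ u in Set.Iic C, Real.exp (-u ^ 2 / 2))
        ≤ 1 + Real.sqrt (2 / π) * C := by rw [← h2]; exact h1
      _ ≤ Real.exp (Real.sqrt (2 / π) * C) := by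
          have := Real.add_one_le_exp (Real.sqrt (2 / π) * C); linarith
  rw [Real.exp_add]
  calc Real.exp (C ^ 2 / 2) * (2 / Real.sqrt (2 * π)) * (∫ u in Set.Iic C, Real.exp (-u ^ 2 / 2))
      = Real.exp (C ^ 2 / 2) * ((2 / Real.sqrt (2 * π)) * ∫ u in Set.Iic C, Real.exp (-u ^ 2 / 2)) := by ring
    _ ≤ Real.exp (C ^ 2 / 2) * Real.exp (Real.sqrt (2 / π) * C) := by
        apply mul_le_mul_of_nonneg_left key (Real.exp_nonneg _)
    _ = Real.exp (Real.sqrt (2 / π) * C) * Real.exp (C ^ 2 / 2) := by ring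

lemma gauss_shift (c : ℝ) (f : ℝ → ℝ) :
    ∫ x in Set.Ioi (0:ℝ), f (x + c) = ∫ x in Set.Ioi c, f x := by
  have A : MeasurableEmbedding (fun x : ℝ => x + c) :=
    (Homeomorph.addRight c).isClosedEmbedding.measurableEmbedding
  have h := A.setIntegral_map (μ := volume) f (Set.Ioi c)
  rw [show (fun x : ℝ => x + c) = (· + c) from rfl, map_add_right_eq_self volume c] at h
  have hpre : (fun x : ℝ => x + c) ⁻¹' Set.Ioi c = Set.Ioi 0 := by
    ext x; simp [lt_add_iff_pos_left]
  rw [hpre] at h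
  exact h.symm

lemma pdf_eq (x : ℝ) : gaussianPDFReal 0 1 x = (Real.sqrt (2 * π))⁻¹ * Real.exp (-x ^ 2 / 2) := by
  simp [gaussianPDFReal]

lemma gauss_int (C : ℝ) :
    ∫ x, Real.exp (C * |x|) * gaussianPDFReal 0 1 x = Kfun C := by
  have habs : ∀ x : ℝ, Real.exp (C * |x|) * gaussianPDFReal 0 1 x
      = (fun y => Real.exp (C * y) * gaussianPDFReal 0 1 y) |x| := by
    intro x
    simp only [pdf_eq, sq_abs]
  calc ∫ x, Real.exp (C * |x|) * gaussianPDFReal 0 1 x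
      = ∫ x, (fun y => Real.exp (C * y) * gaussianPDFReal 0 1 y) |x| := by
        exact integral_congr_ae (Filter.Eventually.of_forall habs)
    _ = 2 * ∫ x in Set.Ioi (0:ℝ), Real.exp (C * x) * gaussianPDFReal 0 1 x := by
        simpa using integral_comp_abs (f := fun y => Real.exp (C * y) * gaussianPDFReal 0 1 y)
    _ = 2 * ∫ x in Set.Ioi (0:ℝ), (Real.sqrt (2 * π))⁻¹ * Real.exp (C ^ 2 / 2) *
          Real.exp (-(x + -C) ^ 2 / 2) := by
        congr 1
        apply setIntegral_congr_fun measurableSet_Ioi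
        intro x _
        dsimp only
        rw [pdf_eq, mul_left_comm, ← Real.exp_add, mul_assoc, ← Real.exp_add]
        congr 2
        ring
    _ = 2 * ((Real.sqrt (2 * π))⁻¹ * Real.exp (C ^ 2 / 2) *
          ∫ x in Set.Ioi (0:ℝ), Real.exp (-(x + -C) ^ 2 / 2)) := by
        rw [integral_const_mul]
    _ = 2 * ((Real.sqrt (2 * π))⁻¹ * Real.exp (C ^ 2 / 2) *
          ∫ x in Set.Ioi (-C), Real.exp (-x ^ 2 / 2)) := by
        rw [gauss_shift (-C) (fun u => Real.exp (-u ^ 2 / 2))]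
    _ = 2 * ((Real.sqrt (2 * π))⁻¹ * Real.exp (C ^ 2 / 2) *
          ∫ x in Set.Iic C, Real.exp (-x ^ 2 / 2)) := by
        have h := integral_comp_neg_Ioi (-C) (fun u => Real.exp (-u ^ 2 / 2))
        simp only [neg_sq, neg_neg] at h
        rw [← h]
    _ = Kfun C := by
        rw [Kfun]
        have hsπ : 0 < Real.sqrt (2 * π) := Real.sqrt_pos.2 (by positivity)
        field_simp

lemma gauss_integrable (C : ℝ) :
    Integrable (fun x => Real.exp (C * |x|) * gaussianPDFReal 0 1 x) := by
  have h1 : Integrable (fun x : ℝ => Real.exp (-(x - C) ^ 2 / 2)) := by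
    have hmp : MeasurePreserving (fun x : ℝ => x + -C) volume volume :=
      ⟨measurable_add_const _, map_add_right_eq_self volume _⟩
    have hI := integrable_exp_neg_mul_sq (by norm_num : (0:ℝ) < 1/2)
    have := (hmp.integrable_comp hI.aestronglyMeasurable).2 hI
    refine this.congr (Filter.Eventually.of_forall fun x => ?_)
    simp only [Function.comp]
    congr 1
    ring
  have h2 : Integrable (fun x : ℝ => Real.exp (-(x + C) ^ 2 / 2)) := by
    have hmp : MeasurePreserving (fun x : ℝ => x + C) volume volume :=
      ⟨measurable_add_const _, map_add_right_eq_self volume _⟩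
    have hI := integrable_exp_neg_mul_sq (by norm_num : (0:ℝ) < 1/2)
    have := (hmp.integrable_comp hI.aestronglyMeasurable).2 hI
    refine this.congr (Filter.Eventually.of_forall fun x => ?_)
    simp only [Function.comp]
    congr 1
    ring
  have hb : Integrable (fun x : ℝ => (Real.sqrt (2 * π))⁻¹ * Real.exp (C ^ 2 / 2) *
      (Real.exp (-(x - C) ^ 2 / 2) + Real.exp (-(x + C) ^ 2 / 2))) :=
    (h1.add h2).const_mul _
  apply hb.mono'
  · exact ((measurable_exp.comp (measurable_const.mul continuous_abs.measurable)).mul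
      (measurable_gaussianPDFReal 0 1)).aestronglyMeasurable
  · refine Filter.Eventually.of_forall fun x => ?_
    rw [Real.norm_of_nonneg (mul_nonneg (Real.exp_nonneg _) (gaussianPDFReal_nonneg _ _ _))]
    rw [pdf_eq]
    have hs : (0:ℝ) < (Real.sqrt (2 * π))⁻¹ := by positivity
    rcases abs_cases x with ⟨h, _⟩ | ⟨h, _⟩
    · have he : Real.exp (C * x) * Real.exp (-x ^ 2 / 2)
          = Real.exp (C ^ 2 / 2) * Real.exp (-(x - C) ^ 2 / 2) := by
        rw [← Real.exp_add, ← Real.exp_add]; ring_nf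
      rw [h]
      nlinarith [Real.exp_nonneg (-(x + C) ^ 2 / 2), Real.exp_nonneg (C ^ 2 / 2),
        mul_nonneg (Real.exp_nonneg (C ^ 2 / 2)) (Real.exp_nonneg (-(x + C) ^ 2 / 2))]
    · have he : Real.exp (C * -x) * Real.exp (-x ^ 2 / 2)
          = Real.exp (C ^ 2 / 2) * Real.exp (-(x + C) ^ 2 / 2) := by
        rw [← Real.exp_add, ← Real.exp_add]; ring_nf
      rw [h]
      nlinarith [Real.exp_nonneg (-(x - C) ^ 2 / 2), Real.exp_nonneg (C ^ 2 / 2),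
        mul_nonneg (Real.exp_nonneg (C ^ 2 / 2)) (Real.exp_nonneg (-(x - C) ^ 2 / 2))]

lemma meas_exp_abs (c : ℝ) : Measurable (fun x : ℝ => ENNReal.ofReal (Real.exp (c * |x|))) :=
  (measurable_exp.comp (measurable_const.mul continuous_abs.measurable)).ennreal_ofReal

lemma lint_std (C : ℝ) :
    ∫⁻ x, ENNReal.ofReal (Real.exp (C * |x|)) ∂(gaussianReal 0 1) = ENNReal.ofReal (Kfun C) := by
  rw [gaussianReal_of_var_ne_zero 0 one_ne_zero,
    lintegral_withDensity_eq_lintegral_mul _ (measurable_gaussianPDF 0 1) (meas_exp_abs C)]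
  have h : ∀ x : ℝ, (gaussianPDF 0 1 * fun x => ENNReal.ofReal (Real.exp (C * |x|))) x
      = ENNReal.ofReal (Real.exp (C * |x|) * gaussianPDFReal 0 1 x) := by
    intro x
    rw [Pi.mul_apply, mul_comm, ENNReal.ofReal_mul (Real.exp_nonneg _)]
    rfl
  simp_rw [h]
  rw [← ofReal_integral_eq_lintegral_ofReal (gauss_integrable C)
    (Filter.Eventually.of_forall fun x =>
      mul_nonneg (Real.exp_nonneg _) (gaussianPDFReal_nonneg _ _ _)), gauss_int C]

lemma var_eq (s : ℝ≥0) : (⟨(s:ℝ)^2, sq_nonneg _⟩ * 1 : ℝ≥0) = s ^ 2 := by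
  apply NNReal.coe_injective
  push_cast
  show (s:ℝ)^2 * 1 = (s:ℝ)^2
  ring

lemma lemG {Ω : Type*} [MeasurableSpace Ω] (P : Measure Ω) (s : ℝ≥0) (hs : 0 < s)
    (X : Ω → ℝ) (hX : Measurable X) (hmap : P.map X = gaussianReal 0 (s ^ 2)) (C : ℝ) :
    ∫⁻ ω, ENNReal.ofReal (Real.exp ((C / (s:ℝ)) * |X ω|)) ∂P = ENNReal.ofReal (Kfun C) := by
  rw [← lintegral_map (meas_exp_abs (C / (s:ℝ))) hX, hmap]
  have hmapmul : gaussianReal 0 (s ^ 2) = (gaussianReal 0 1).map (fun y => (s:ℝ) * y) := by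
    rw [show (fun y : ℝ => (s:ℝ) * y) = ((s:ℝ) * ·) from rfl, gaussianReal_map_const_mul,
      mul_zero]
    congr 1
    exact NNReal.eq (by simp)
  rw [hmapmul, lintegral_map (meas_exp_abs (C / (s:ℝ))) (measurable_const_mul _)]
  have h : ∀ y : ℝ, (C / (s:ℝ)) * |(s:ℝ) * y| = C * |y| := by
    intro y
    rw [abs_mul, abs_of_nonneg s.coe_nonneg]
    have : (s:ℝ) ≠ 0 := ne_of_gt hs
    field_simp
  simp_rw [h]
  exact lint_std C

lemma ae_eq_zero_of_gauss {Ω : Type*} [MeasurableSpace Ω] (P : Measure Ω) (X : Ω → ℝ)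
    (hX : Measurable X) (hmap : P.map X = gaussianReal 0 0) : ∀ᵐ ω ∂P, X ω = 0 := by
  rw [gaussianReal_zero_var] at hmap
  rw [ae_iff]
  have hset : {ω | ¬ X ω = 0} = X ⁻¹' ({0}ᶜ) := rfl
  rw [hset, ← Measure.map_apply hX (measurableSet_singleton (0:ℝ)).compl, hmap]
  simp

lemma jensen_exp {α : Type*} [MeasurableSpace α] (ν : Measure α) [IsProbabilityMeasure ν]
    (f : α → ℝ) (hf : Integrable f ν) :
    ENNReal.ofReal (Real.exp (∫ a, f a ∂ν)) ≤ ∫⁻ a, ENNReal.ofReal (Real.exp (f a)) ∂ν := by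
  set a0 := ∫ a, f a ∂ν with ha0
  have hpt : ∀ x : ℝ, Real.exp a0 * (1 + (x - a0)) ≤ Real.exp x := by
    intro x
    have h1 := Real.add_one_le_exp (x - a0)
    calc Real.exp a0 * (1 + (x - a0)) = Real.exp a0 * ((x - a0) + 1) := by ring
      _ ≤ Real.exp a0 * Real.exp (x - a0) :=
          mul_le_mul_of_nonneg_left h1 (Real.exp_nonneg _)
      _ = Real.exp x := by rw [← Real.exp_add]; ring_nf
  set g : α → ℝ := fun a => Real.exp a0 * (1 + (f a - a0)) with hg
  have hgint : Integrable g ν :=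
    (((integrable_const (1:ℝ)).add (hf.sub (integrable_const a0))).const_mul (Real.exp a0)).congr
      (Filter.Eventually.of_forall fun a => by simp only [hg, Pi.add_apply, Pi.sub_apply])
  have hgval : ∫ a, g a ∂ν = Real.exp a0 := by
    simp only [hg]
    rw [integral_const_mul]
    have hsub : Integrable (fun a => f a - a0) ν := hf.sub (integrable_const a0)
    have : ∫ a, (1 + (f a - a0)) ∂ν = 1 + (a0 - a0) := by
      rw [integral_add (integrable_const 1) hsub, integral_sub hf (integrable_const a0)]
      simp
      exact sub_eq_zero.mpr ha0.symm
    rw [this]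
    simp
  set g' : α → ℝ := fun a => max (g a) 0 with hg'
  have hg'int : Integrable g' ν := hgint.pos_part
  calc ENNReal.ofReal (Real.exp a0) = ENNReal.ofReal (∫ a, g a ∂ν) := by rw [hgval]
    _ ≤ ENNReal.ofReal (∫ a, g' a ∂ν) := by
        apply ENNReal.ofReal_le_ofReal
        exact integral_mono hgint hg'int (fun a => le_max_left _ _)
    _ = ∫⁻ a, ENNReal.ofReal (g' a) ∂ν :=
        ofReal_integral_eq_lintegral_ofReal hg'int
          (Filter.Eventually.of_forall fun a => le_max_right _ _)
    _ ≤ ∫⁻ a, ENNReal.ofReal (Real.exp (f a)) ∂ν := by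
        apply lintegral_mono
        intro a
        apply ENNReal.ofReal_le_ofReal
        simp only [hg', max_le_iff]
        exact ⟨hpt (f a), Real.exp_nonneg _⟩

lemma per_t {Ω : Type*} [MeasurableSpace Ω] (P : Measure Ω)
    (s d : ℝ≥0) (hsd : (0:ℝ) < (s:ℝ) + (d:ℝ))
    (X Y : Ω → ℝ) (hX : Measurable X) (hY : Measurable Y)
    (hmX : P.map X = gaussianReal 0 (s ^ 2)) (hmY : P.map Y = gaussianReal 0 (d ^ 2))
    (C : ℝ) :
    ∫⁻ ω, ENNReal.ofReal (Real.exp ((C / ((s:ℝ) + (d:ℝ))) * (|X ω| + |Y ω|))) ∂P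
      ≤ ENNReal.ofReal (Kfun C) := by
  by_cases hs : s = 0
  · have hd : 0 < d := by
      rcases eq_or_lt_of_le (zero_le : 0 ≤ d) with h | h
      · exfalso; rw [hs] at hsd; rw [← h] at hsd; simp at hsd
      · exact h
    have hX0 : ∀ᵐ ω ∂P, X ω = 0 :=
      ae_eq_zero_of_gauss P X hX (by simpa [hs] using hmX)
    have hcongr : ∀ᵐ ω ∂P, ENNReal.ofReal (Real.exp ((C / ((s:ℝ) + (d:ℝ))) * (|X ω| + |Y ω|)))
        = ENNReal.ofReal (Real.exp ((C / (d:ℝ)) * |Y ω|)) := by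
      filter_upwards [hX0] with ω hω
      rw [hω, hs]
      norm_num
    rw [lintegral_congr_ae hcongr, lemG P d hd Y hY hmY C]
  · by_cases hd : d = 0
    · have hs' : 0 < s := pos_iff_ne_zero.mpr hs
      have hY0 : ∀ᵐ ω ∂P, Y ω = 0 :=
        ae_eq_zero_of_gauss P Y hY (by simpa [hd] using hmY)
      have hcongr : ∀ᵐ ω ∂P, ENNReal.ofReal (Real.exp ((C / ((s:ℝ) + (d:ℝ))) * (|X ω| + |Y ω|)))
          = ENNReal.ofReal (Real.exp ((C / (s:ℝ)) * |X ω|)) := by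
        filter_upwards [hY0] with ω hω
        rw [hω, hd]
        norm_num
      rw [lintegral_congr_ae hcongr, lemG P s hs' X hX hmX C]
    · have hs' : (0:ℝ) < (s:ℝ) := by positivity
      have hd' : (0:ℝ) < (d:ℝ) := by positivity
      set l : ℝ := (s:ℝ) / ((s:ℝ) + (d:ℝ)) with hl_def
      have hl0 : 0 ≤ l := by positivity
      have hl1 : 0 ≤ 1 - l := by
        rw [sub_nonneg, hl_def, div_le_one hsd]
        linarith [d.coe_nonneg]
      calc ∫⁻ ω, ENNReal.ofReal (Real.exp ((C / ((s:ℝ) + (d:ℝ))) * (|X ω| + |Y ω|))) ∂P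
          ≤ ∫⁻ ω, (ENNReal.ofReal (l * Real.exp ((C / (s:ℝ)) * |X ω|))
              + ENNReal.ofReal ((1 - l) * Real.exp ((C / (d:ℝ)) * |Y ω|))) ∂P := by
            apply lintegral_mono
            intro ω
            dsimp only
            rw [← ENNReal.ofReal_add (mul_nonneg hl0 (Real.exp_nonneg _))
              (mul_nonneg hl1 (Real.exp_nonneg _))]
            apply ENNReal.ofReal_le_ofReal
            have harg : (C / ((s:ℝ) + (d:ℝ))) * (|X ω| + |Y ω|)
                = l * ((C / (s:ℝ)) * |X ω|) + (1 - l) * ((C / (d:ℝ)) * |Y ω|) := by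
              rw [hl_def]
              field_simp
              ring
            rw [harg]
            have hcx := convexOn_exp.2 (Set.mem_univ ((C / (s:ℝ)) * |X ω|))
              (Set.mem_univ ((C / (d:ℝ)) * |Y ω|)) hl0 hl1 (by ring)
            simpa [smul_eq_mul] using hcx
        _ = ENNReal.ofReal l * ∫⁻ ω, ENNReal.ofReal (Real.exp ((C / (s:ℝ)) * |X ω|)) ∂P
            + ENNReal.ofReal (1 - l) * ∫⁻ ω, ENNReal.ofReal (Real.exp ((C / (d:ℝ)) * |Y ω|)) ∂P := by
            have m1 : Measurable fun ω => ENNReal.ofReal (Real.exp (C / (s:ℝ) * |X ω|)) :=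
              (meas_exp_abs (C / (s:ℝ))).comp hX
            have m2 : Measurable fun ω => ENNReal.ofReal (Real.exp (C / (d:ℝ) * |Y ω|)) :=
              (meas_exp_abs (C / (d:ℝ))).comp hY
            simp_rw [ENNReal.ofReal_mul hl0, ENNReal.ofReal_mul hl1]
            rw [lintegral_add_left (m1.const_mul _), lintegral_const_mul _ m1,
              lintegral_const_mul _ m2]
        _ = ENNReal.ofReal l * ENNReal.ofReal (Kfun C)
            + ENNReal.ofReal (1 - l) * ENNReal.ofReal (Kfun C) := by
            rw [lemG P s (pos_iff_ne_zero.mpr hs) X hX hmX C, lemG P d (pos_iff_ne_zero.mpr hd) Y hY hmY C]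
        _ = ENNReal.ofReal (Kfun C) := by
            rw [← add_mul, ← ENNReal.ofReal_add hl0 hl1]
            simp

lemma Kfun_zero : Kfun 0 = 1 := by
  rw [Kfun, aux_Iic0]
  have hsπ : 0 < Real.sqrt (2 * π) := Real.sqrt_pos.2 (by positivity)
  field_simp
  simp

/-- Two jointly measurable families `ξ, η` (on the same probability space,
possibly dependent) of centered Gaussian random variables with standard deviations `σ t`, `δ t`.
Set `C = ∫_A (σ_t + δ_t) m(dt)`.  If `C < ∞`, then
`E exp (∫_A (|ξ_t| + |η_t|) m(dt)) ≤ e^{C²/2} (2/√(2π)) ∫_{-∞}^C e^{-u²/2} du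
  ≤ exp (√(2/π) C + C²/2)`. -/
theorem stmt2
    {A : Type*} [MeasurableSpace A] (m : Measure A) [SigmaFinite m]
    {Ω : Type*} [MeasurableSpace Ω] (P : Measure Ω) [IsProbabilityMeasure P]
    (ξ η : A → Ω → ℝ)
    (hξ : Measurable (Function.uncurry ξ)) (hη : Measurable (Function.uncurry η))
    (σ δ : A → ℝ≥0) (hσ : Measurable σ) (hδ : Measurable δ)
    (hGaussξ : ∀ t, P.map (ξ t) = gaussianReal 0 (σ t ^ 2))
    (hGaussη : ∀ t, P.map (η t) = gaussianReal 0 (δ t ^ 2))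
    (hint : Integrable (fun t => (σ t : ℝ) + (δ t : ℝ)) m)
    (C : ℝ) (hC : C = ∫ t, ((σ t : ℝ) + (δ t : ℝ)) ∂m) :
    (∫⁻ ω, ENNReal.ofReal (Real.exp (∫ t, (|ξ t ω| + |η t ω|) ∂m)) ∂P)
      ≤ ENNReal.ofReal (Real.exp (C ^ 2 / 2) * (2 / Real.sqrt (2 * π)) *
          ∫ u in Set.Iic C, Real.exp (-u ^ 2 / 2)) ∧
    Real.exp (C ^ 2 / 2) * (2 / Real.sqrt (2 * π)) * (∫ u in Set.Iic C, Real.exp (-u ^ 2 / 2))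
      ≤ Real.exp (Real.sqrt (2 / π) * C + C ^ 2 / 2) := by
  have hC0 : 0 ≤ C := hC ▸ integral_nonneg (fun t => by positivity)
  refine ⟨?_, aux_part2 C hC0⟩
  show _ ≤ ENNReal.ofReal (Kfun C)
  -- basic measurability
  have hmeasξ : ∀ t, Measurable (ξ t) := fun t => hξ.of_uncurry_left
  have hmeasη : ∀ t, Measurable (η t) := fun t => hη.of_uncurry_left
  set N : A → Ω → ℝ := fun t ω => |ξ t ω| + |η t ω| with hN
  have hNmeas : Measurable fun p : A × Ω => N p.1 p.2 := hξ.abs.add hη.abs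
  have hNt : ∀ t, Measurable (N t) := fun t => (hmeasξ t).abs.add (hmeasη t).abs
  have hNω : ∀ ω, Measurable (fun t => N t ω) := fun ω =>
    hNmeas.comp (measurable_id.prodMk measurable_const)
  have hNnn : ∀ t ω, 0 ≤ N t ω := fun t ω => by positivity
  have hσδmeas : Measurable fun t => (σ t : ℝ) + (δ t : ℝ) :=
    hσ.coe_nnreal_real.add hδ.coe_nnreal_real
  -- single-variable expectation bounds
  have habs_one : ∀ (s : ℝ≥0) (X : Ω → ℝ), Measurable X → P.map X = gaussianReal 0 (s ^ 2) →
      ∫⁻ ω, ENNReal.ofReal |X ω| ∂P ≤ ENNReal.ofReal (s : ℝ) * ENNReal.ofReal (Kfun 1) := by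
    intro s X hXm hXg
    by_cases hs : s = 0
    · have h0 := ae_eq_zero_of_gauss P X hXm (by simpa [hs] using hXg)
      have hz : ∫⁻ ω, ENNReal.ofReal |X ω| ∂P = 0 := by
        calc ∫⁻ ω, ENNReal.ofReal |X ω| ∂P = ∫⁻ _, 0 ∂P :=
              lintegral_congr_ae (h0.mono fun ω hω => by dsimp only; rw [hω]; simp)
          _ = 0 := lintegral_zero
      rw [hz]
      exact zero_le
    · have hspos : (0:ℝ) < s := by positivity
      have hb : ∀ ω, ENNReal.ofReal |X ω| ≤
          ENNReal.ofReal (s : ℝ) * ENNReal.ofReal (Real.exp ((1 / (s:ℝ)) * |X ω|)) := by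
        intro ω
        rw [← ENNReal.ofReal_mul s.coe_nonneg]
        apply ENNReal.ofReal_le_ofReal
        have h1 : (1 / (s:ℝ)) * |X ω| ≤ Real.exp ((1 / (s:ℝ)) * |X ω|) := by
          have := Real.add_one_le_exp ((1 / (s:ℝ)) * |X ω|)
          linarith
        calc |X ω| = (s:ℝ) * ((1 / (s:ℝ)) * |X ω|) := by field_simp
          _ ≤ (s:ℝ) * Real.exp ((1 / (s:ℝ)) * |X ω|) :=
              mul_le_mul_of_nonneg_left h1 s.coe_nonneg
      calc ∫⁻ ω, ENNReal.ofReal |X ω| ∂P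
          ≤ ∫⁻ ω, ENNReal.ofReal (s : ℝ) * ENNReal.ofReal (Real.exp ((1 / (s:ℝ)) * |X ω|)) ∂P :=
            lintegral_mono hb
        _ = ENNReal.ofReal (s : ℝ) * ∫⁻ ω, ENNReal.ofReal (Real.exp ((1 / (s:ℝ)) * |X ω|)) ∂P :=
            lintegral_const_mul _ ((meas_exp_abs (1 / (s:ℝ))).comp hXm)
        _ = ENNReal.ofReal (s : ℝ) * ENNReal.ofReal (Kfun 1) := by
            rw [lemG P s (pos_iff_ne_zero.mpr hs) X hXm hXg 1]
  have habs_bound : ∀ t, (∫⁻ ω, ENNReal.ofReal (N t ω) ∂P)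
      ≤ ENNReal.ofReal ((σ t : ℝ) + (δ t : ℝ)) * ENNReal.ofReal (Kfun 1) := by
    intro t
    have hsplit : ∫⁻ ω, ENNReal.ofReal (N t ω) ∂P
        = ∫⁻ ω, ENNReal.ofReal |ξ t ω| ∂P + ∫⁻ ω, ENNReal.ofReal |η t ω| ∂P := by
      rw [← lintegral_add_left ((hmeasξ t).abs.ennreal_ofReal)]
      apply lintegral_congr
      intro ω
      rw [← ENNReal.ofReal_add (abs_nonneg _) (abs_nonneg _)]
    rw [hsplit, ENNReal.ofReal_add (σ t).coe_nonneg (δ t).coe_nonneg, add_mul]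
    exact add_le_add (habs_one (σ t) (ξ t) (hmeasξ t) (hGaussξ t))
      (habs_one (δ t) (η t) (hmeasη t) (hGaussη t))
  have hσδ_lint : ∫⁻ t, ENNReal.ofReal ((σ t:ℝ) + (δ t:ℝ)) ∂m = ENNReal.ofReal C := by
    rw [hC, ← ofReal_integral_eq_lintegral_ofReal hint
      (Filter.Eventually.of_forall fun t => by positivity)]
  have hinner_meas : Measurable fun p : Ω × A => ENNReal.ofReal (N p.2 p.1) :=
    (hNmeas.comp measurable_swap).ennreal_ofReal
  have hfin1 : ∫⁻ t, (∫⁻ ω, ENNReal.ofReal (N t ω) ∂P) ∂m ≠ ⊤ := by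
    have hle : ∫⁻ t, (∫⁻ ω, ENNReal.ofReal (N t ω) ∂P) ∂m
        ≤ ∫⁻ t, ENNReal.ofReal ((σ t:ℝ) + (δ t:ℝ)) * ENNReal.ofReal (Kfun 1) ∂m :=
      lintegral_mono habs_bound
    rw [lintegral_mul_const _ hσδmeas.ennreal_ofReal, hσδ_lint] at hle
    exact ne_top_of_le_ne_top (by finiteness) hle
  have hswap1 : ∫⁻ ω, (∫⁻ t, ENNReal.ofReal (N t ω) ∂m) ∂P
      = ∫⁻ t, (∫⁻ ω, ENNReal.ofReal (N t ω) ∂P) ∂m :=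
    lintegral_lintegral_swap hinner_meas.aemeasurable
  have haeω_fin : ∀ᵐ ω ∂P, (∫⁻ t, ENNReal.ofReal (N t ω) ∂m) < ⊤ :=
    ae_lt_top hinner_meas.lintegral_prod_right' (by rw [hswap1]; exact hfin1)
  have hinner0 : ∀ t, (σ t:ℝ) + (δ t:ℝ) = 0 → ∫⁻ ω, ENNReal.ofReal (N t ω) ∂P = 0 := by
    intro t ht
    have hσ0 : σ t = 0 := by
      have h2 := (σ t).coe_nonneg; have h3 := (δ t).coe_nonneg
      have : (σ t : ℝ) = 0 := by linarith
      exact_mod_cast this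
    have hδ0 : δ t = 0 := by
      have h2 := (σ t).coe_nonneg; have h3 := (δ t).coe_nonneg
      have : (δ t : ℝ) = 0 := by linarith
      exact_mod_cast this
    have hξ0 := ae_eq_zero_of_gauss P (ξ t) (hmeasξ t) (by simpa [hσ0] using hGaussξ t)
    have hη0 := ae_eq_zero_of_gauss P (η t) (hmeasη t) (by simpa [hδ0] using hGaussη t)
    calc ∫⁻ ω, ENNReal.ofReal (N t ω) ∂P = ∫⁻ _, 0 ∂P := by
          apply lintegral_congr_ae
          filter_upwards [hξ0, hη0] with ω h1 h2
          simp [hN, h1, h2]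
      _ = 0 := lintegral_zero
  show (∫⁻ ω, ENNReal.ofReal (Real.exp (∫ t, N t ω ∂m)) ∂P) ≤ ENNReal.ofReal (Kfun C)
  rcases eq_or_lt_of_le hC0 with hCz | hCpos
  -- case C = 0
  · have haet : ∀ᵐ t ∂m, (σ t:ℝ) + (δ t:ℝ) = 0 := by
      have h := (integral_eq_zero_iff_of_nonneg (fun t => by positivity) hint).mp
        (by rw [← hC, ← hCz])
      filter_upwards [h] with t ht using ht
    have h0 : ∫⁻ t, (∫⁻ ω, ENNReal.ofReal (N t ω) ∂P) ∂m = 0 := by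
      calc ∫⁻ t, (∫⁻ ω, ENNReal.ofReal (N t ω) ∂P) ∂m = ∫⁻ _, 0 ∂m :=
            lintegral_congr_ae (haet.mono fun t ht => hinner0 t ht)
        _ = 0 := lintegral_zero
    have hae0 : ∀ᵐ ω ∂P, (∫⁻ t, ENNReal.ofReal (N t ω) ∂m) = 0 := by
      have h1 := (lintegral_eq_zero_iff hinner_meas.lintegral_prod_right').mp
        (by rw [hswap1]; exact h0)
      filter_upwards [h1] with ω hω using hω
    have haeX : ∀ᵐ ω ∂P, ∫ t, N t ω ∂m = 0 := by
      filter_upwards [hae0] with ω hω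
      rw [integral_eq_lintegral_of_nonneg_ae (Filter.Eventually.of_forall fun t => hNnn t ω)
        (hNω ω).aestronglyMeasurable, hω]
      simp
    calc (∫⁻ ω, ENNReal.ofReal (Real.exp (∫ t, N t ω ∂m)) ∂P)
        = ∫⁻ _, ENNReal.ofReal (Real.exp 0) ∂P :=
          lintegral_congr_ae (haeX.mono fun ω hω => by dsimp only; rw [hω])
      _ = 1 := by simp
      _ ≤ ENNReal.ofReal (Kfun C) := by rw [← hCz, Kfun_zero]; simp
  -- case C > 0
  · set ρ : A → ℝ≥0∞ := fun t => ENNReal.ofReal (((σ t:ℝ) + (δ t:ℝ)) / C) with hρ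
    have hρmeas : Measurable ρ := (hσδmeas.div_const C).ennreal_ofReal
    set ν : Measure A := m.withDensity ρ with hν
    have hνuniv : ν Set.univ = 1 := by
      rw [hν, withDensity_apply _ MeasurableSet.univ, setLIntegral_univ]
      have hdiv : Integrable (fun t => ((σ t:ℝ) + (δ t:ℝ)) / C) m := hint.div_const C
      rw [hρ, ← ofReal_integral_eq_lintegral_ofReal hdiv
        (Filter.Eventually.of_forall fun t => by positivity)]
      rw [integral_div, ← hC, div_self (ne_of_gt hCpos)]
      simp
    haveI hνprob : IsProbabilityMeasure ν := ⟨hνuniv⟩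
    set S : Set A := {t | (σ t:ℝ) + (δ t:ℝ) = 0} with hS
    have hSmeas : MeasurableSet S := hσδmeas (measurableSet_singleton 0)
    have hνS : ν S = 0 := by
      rw [hν, withDensity_apply _ hSmeas]
      calc ∫⁻ t in S, ρ t ∂m = ∫⁻ _ in S, 0 ∂m := by
            apply setLIntegral_congr_fun hSmeas
            exact fun t ht => by simp [hρ, Set.mem_setOf_eq.mp ht]
        _ = 0 := by simp
    have hSzero : ∀ᵐ ω ∂P, ∫⁻ t in S, ENNReal.ofReal (N t ω) ∂m = 0 := by
      have h0 : ∫⁻ t in S, (∫⁻ ω, ENNReal.ofReal (N t ω) ∂P) ∂m = 0 := by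
        calc ∫⁻ t in S, (∫⁻ ω, ENNReal.ofReal (N t ω) ∂P) ∂m = ∫⁻ _ in S, 0 ∂m := by
              apply setLIntegral_congr_fun hSmeas
              exact fun t ht => hinner0 t ht
          _ = 0 := by simp
      have hswapS : ∫⁻ ω, (∫⁻ t, ENNReal.ofReal (N t ω) ∂(m.restrict S)) ∂P
          = ∫⁻ t, (∫⁻ ω, ENNReal.ofReal (N t ω) ∂P) ∂(m.restrict S) :=
        lintegral_lintegral_swap hinner_meas.aemeasurable
      have h1 := (lintegral_eq_zero_iff
        (hinner_meas.lintegral_prod_right' (ν := m.restrict S))).mp (by rw [hswapS]; exact h0)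
      filter_upwards [h1] with ω hω using hω
    set F : A → Ω → ℝ := fun t ω => (C / ((σ t:ℝ) + (δ t:ℝ))) * N t ω with hF
    have hcoef_meas : Measurable fun t => C / ((σ t:ℝ) + (δ t:ℝ)) :=
      measurable_const.div hσδmeas
    have hFunc : Measurable fun p : A × Ω => F p.1 p.2 :=
      (hcoef_meas.comp measurable_fst).mul hNmeas
    have hFnn : ∀ t ω, 0 ≤ F t ω := fun t ω =>
      mul_nonneg (div_nonneg hC0 (by positivity)) (hNnn t ω)
    -- Jensen step, a.e. in ω
    have hjensen : ∀ᵐ ω ∂P, ENNReal.ofReal (Real.exp (∫ t, N t ω ∂m))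
        ≤ ∫⁻ t, ENNReal.ofReal (Real.exp (F t ω)) ∂ν := by
      filter_upwards [haeω_fin, hSzero] with ω h1 h2
      have hFωmeas : Measurable fun t => F t ω :=
        hFunc.comp (measurable_id.prodMk measurable_const)
      have hms : ∀ᵐ t ∂m, t ∈ S → N t ω = 0 := by
        have h3 := (lintegral_eq_zero_iff ((hNω ω).ennreal_ofReal)).mp h2
        have h4 := (ae_restrict_iff' hSmeas).mp h3
        filter_upwards [h4] with t ht hts
        have h5 := ht hts
        simp only [Pi.zero_apply, ENNReal.ofReal_eq_zero] at h5
        exact le_antisymm h5 (hNnn t ω)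
      have hint_f : ∫⁻ t, ENNReal.ofReal (F t ω) ∂ν = ∫⁻ t, ENNReal.ofReal (N t ω) ∂m := by
        rw [hν, lintegral_withDensity_eq_lintegral_mul m hρmeas hFωmeas.ennreal_ofReal]
        apply lintegral_congr_ae
        filter_upwards [hms] with t ht
        by_cases hts : (σ t:ℝ) + (δ t:ℝ) = 0
        · have hN0 : N t ω = 0 := ht hts
          simp [hρ, hF, hts, hN0]
        · rw [Pi.mul_apply, hρ, ← ENNReal.ofReal_mul (by positivity)]
          congr 1
          rw [hF]
          field_simp
      have hfin' : ∫⁻ t, ENNReal.ofReal (F t ω) ∂ν ≠ ⊤ := by rw [hint_f]; exact h1.ne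
      have hF_int : Integrable (fun t => F t ω) ν := by
        refine ⟨hFωmeas.aestronglyMeasurable, ?_⟩
        rw [hasFiniteIntegral_iff_ofReal (Filter.Eventually.of_forall fun t => hFnn t ω)]
        exact lt_of_le_of_ne le_top hfin'
      have hXeq : ∫ t, F t ω ∂ν = ∫ t, N t ω ∂m := by
        rw [integral_eq_lintegral_of_nonneg_ae (Filter.Eventually.of_forall fun t => hFnn t ω)
          hFωmeas.aestronglyMeasurable,
          integral_eq_lintegral_of_nonneg_ae (Filter.Eventually.of_forall fun t => hNnn t ω)
          (hNω ω).aestronglyMeasurable, hint_f]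
      calc ENNReal.ofReal (Real.exp (∫ t, N t ω ∂m))
          = ENNReal.ofReal (Real.exp (∫ t, F t ω ∂ν)) := by rw [hXeq]
        _ ≤ ∫⁻ t, ENNReal.ofReal (Real.exp (F t ω)) ∂ν := jensen_exp ν _ hF_int
    have hswap2 : ∫⁻ ω, (∫⁻ t, ENNReal.ofReal (Real.exp (F t ω)) ∂ν) ∂P
        = ∫⁻ t, (∫⁻ ω, ENNReal.ofReal (Real.exp (F t ω)) ∂P) ∂ν :=
      lintegral_lintegral_swap
        ((measurable_exp.comp (hFunc.comp measurable_swap)).ennreal_ofReal).aemeasurable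
    have hper : ∀ᵐ t ∂ν, (∫⁻ ω, ENNReal.ofReal (Real.exp (F t ω)) ∂P)
        ≤ ENNReal.ofReal (Kfun C) := by
      have hae_ne : ∀ᵐ t ∂ν, (σ t:ℝ) + (δ t:ℝ) ≠ 0 := by
        rw [ae_iff]
        simpa only [not_not] using hνS
      filter_upwards [hae_ne] with t ht
      have hpos : (0:ℝ) < (σ t:ℝ) + (δ t:ℝ) := lt_of_le_of_ne (by positivity) (Ne.symm ht)
      exact per_t P (σ t) (δ t) hpos (ξ t) (η t) (hmeasξ t) (hmeasη t)
        (hGaussξ t) (hGaussη t) C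
    calc (∫⁻ ω, ENNReal.ofReal (Real.exp (∫ t, N t ω ∂m)) ∂P)
        ≤ ∫⁻ ω, (∫⁻ t, ENNReal.ofReal (Real.exp (F t ω)) ∂ν) ∂P := lintegral_mono_ae hjensen
      _ = ∫⁻ t, (∫⁻ ω, ENNReal.ofReal (Real.exp (F t ω)) ∂P) ∂ν := hswap2
      _ ≤ ∫⁻ _, ENNReal.ofReal (Kfun C) ∂ν := lintegral_mono_ae hper
      _ = ENNReal.ofReal (Kfun C) := by rw [lintegral_const, hνuniv, mul_one]
end

section
/- Let p ≥ 1 and let f, g : (0,∞) → (0,∞) be decreasing functions. Then for every a ∈ ℝ^p, ∫_{ℝ^p} f(|x+a|) g(|x|) dx ≤ ∫_{ℝ^p} f(|x|) g(|x|) dx, where both integrals are taken in [0, ∞] with respect to Lebesgue measure on ℝ^p. -/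
open MeasureTheory
open scoped ENNReal

lemma meas_ind (f : ℝ → ℝ)
    (hf : ∀ ⦃x y : ℝ⦄, 0 < x → x ≤ y → f y ≤ f x) :
    Measurable (Set.indicator (Set.Ioi (0:ℝ)) f) := by
  have key : ∀ n : ℕ, Antitone (fun r : ℝ => f (max r (1/(n+1)))) := by
    intro n r₁ r₂ h
    exact hf (lt_max_of_lt_right (by positivity)) (max_le_max h le_rfl)
  have meas_n : ∀ n : ℕ,
      Measurable (Set.indicator (Set.Ioi (0:ℝ)) (fun r => f (max r (1/(n+1))))) :=
    fun n => ((key n).measurable).indicator measurableSet_Ioi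
  apply measurable_of_tendsto_metrizable' Filter.atTop meas_n
  rw [tendsto_pi_nhds]
  intro r
  rcases le_or_gt r 0 with h | h
  · have : ∀ n : ℕ, Set.indicator (Set.Ioi (0:ℝ)) (fun s => f (max s (1/(n+1)))) r = Set.indicator (Set.Ioi (0:ℝ)) f r := by
      intro n
      rw [Set.indicator_of_notMem (by simpa using h), Set.indicator_of_notMem (by simpa using h)]
    simp only [this]
    exact tendsto_const_nhds
  · obtain ⟨N, hN⟩ := exists_nat_gt (1/r)
    apply Filter.Tendsto.congr' (f₁ := fun _ => Set.indicator (Set.Ioi (0:ℝ)) f r)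
    · filter_upwards [Filter.eventually_ge_atTop N] with n hn
      have h1 : (1:ℝ)/(n+1) ≤ r := by
        rw [div_le_iff₀ (by positivity)]
        rw [div_lt_iff₀ h] at hN
        nlinarith [hN.le, (Nat.cast_le (α := ℝ)).2 hn]
      rw [Set.indicator_of_mem (Set.mem_Ioi.2 h), Set.indicator_of_mem (Set.mem_Ioi.2 h)]
      rw [max_eq_left h1]
    · exact tendsto_const_nhds


lemma layer {p : ℕ} (φ ψ : ℝ → ℝ) (hφm : Measurable φ) (hψm : Measurable ψ)
    (a : EuclideanSpace ℝ (Fin p)) :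
    ∫⁻ x : EuclideanSpace ℝ (Fin p),
        ENNReal.ofReal (φ ‖x + a‖) * ENNReal.ofReal (ψ ‖x‖)
      = ∫⁻ st : ℝ × ℝ, volume {x : EuclideanSpace ℝ (Fin p) |
          0 < st.1 ∧ st.1 < φ ‖x + a‖ ∧ 0 < st.2 ∧ st.2 < ψ ‖x‖} := by
  set h : EuclideanSpace ℝ (Fin p) → ℝ × ℝ → ℝ≥0∞ := fun x st =>
    Set.indicator {q : ℝ × ℝ | 0 < q.1 ∧ q.1 < φ ‖x + a‖ ∧ 0 < q.2 ∧ q.2 < ψ ‖x‖} 1 st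
    with hh
  have hm1 : Measurable fun q : EuclideanSpace ℝ (Fin p) × (ℝ × ℝ) => φ ‖q.1 + a‖ :=
    hφm.comp ((measurable_fst.add_const a).norm)
  have hm2 : Measurable fun q : EuclideanSpace ℝ (Fin p) × (ℝ × ℝ) => ψ ‖q.1‖ := hψm.comp measurable_fst.norm
  have hC : MeasurableSet {q : EuclideanSpace ℝ (Fin p) × (ℝ × ℝ) |
      0 < q.2.1 ∧ q.2.1 < φ ‖q.1 + a‖ ∧ 0 < q.2.2 ∧ q.2.2 < ψ ‖q.1‖} := by
    refine (measurableSet_lt measurable_const measurable_snd.fst).inter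
      ((measurableSet_lt measurable_snd.fst hm1).inter
      ((measurableSet_lt measurable_const measurable_snd.snd).inter
        (measurableSet_lt measurable_snd.snd hm2)))
  have huncurry : Function.uncurry h = Set.indicator {q : EuclideanSpace ℝ (Fin p) × (ℝ × ℝ) |
      0 < q.2.1 ∧ q.2.1 < φ ‖q.1 + a‖ ∧ 0 < q.2.2 ∧ q.2.2 < ψ ‖q.1‖} 1 := by
    funext q
    simp only [Function.uncurry, hh, Set.indicator_apply, Set.mem_setOf_eq, Pi.one_apply]
  have hmeas : AEMeasurable (Function.uncurry h)
      ((volume : Measure (EuclideanSpace ℝ (Fin p))).prod (volume : Measure (ℝ × ℝ))) := by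
    rw [huncurry]
    exact (measurable_one.indicator hC).aemeasurable
  calc ∫⁻ x : EuclideanSpace ℝ (Fin p), ENNReal.ofReal (φ ‖x + a‖) * ENNReal.ofReal (ψ ‖x‖)
      = ∫⁻ x : EuclideanSpace ℝ (Fin p), ∫⁻ st : ℝ × ℝ, h x st := by
        refine lintegral_congr fun x => ?_
        have hset : {q : ℝ × ℝ | 0 < q.1 ∧ q.1 < φ ‖x + a‖ ∧ 0 < q.2 ∧ q.2 < ψ ‖x‖}
            = Set.Ioo (0:ℝ) (φ ‖x + a‖) ×ˢ Set.Ioo (0:ℝ) (ψ ‖x‖) := by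
          ext q; simp [Set.mem_prod, Set.mem_Ioo, and_assoc]
        rw [hh]
        simp only [hset]
        rw [lintegral_indicator_one (measurableSet_Ioo.prod measurableSet_Ioo),
          MeasureTheory.Measure.volume_eq_prod, Measure.prod_prod, Real.volume_Ioo, Real.volume_Ioo, sub_zero,
          sub_zero]
    _ = ∫⁻ st : ℝ × ℝ, ∫⁻ x : EuclideanSpace ℝ (Fin p), h x st := lintegral_lintegral_swap hmeas
    _ = ∫⁻ st : ℝ × ℝ, volume {x : EuclideanSpace ℝ (Fin p) |
          0 < st.1 ∧ st.1 < φ ‖x + a‖ ∧ 0 < st.2 ∧ st.2 < ψ ‖x‖} := by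
        refine lintegral_congr fun st => ?_
        have : (fun x => h x st) = Set.indicator {x : EuclideanSpace ℝ (Fin p) |
            0 < st.1 ∧ st.1 < φ ‖x + a‖ ∧ 0 < st.2 ∧ st.2 < ψ ‖x‖} 1 := by
          funext x
          simp only [hh, Set.indicator_apply, Set.mem_setOf_eq, Pi.one_apply]
        rw [this, lintegral_indicator_one]
        refine (MeasurableSet.const _).inter
          ((measurableSet_lt measurable_const (hφm.comp ((measurable_id.add_const a).norm))).inter
          ((MeasurableSet.const _).inter
            (measurableSet_lt measurable_const (hψm.comp measurable_norm))))

/-- Let `p ≥ 1` and let `f, g : (0,∞) → (0,∞)` be decreasing functions.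
Then for every `a ∈ ℝ^p`,
`∫_{ℝ^p} f(|x+a|) g(|x|) dx ≤ ∫_{ℝ^p} f(|x|) g(|x|) dx`,
both integrals taken in `[0,∞]` with respect to Lebesgue measure. -/
theorem stmt3 {p : ℕ} (hp : 1 ≤ p) (f g : ℝ → ℝ)
    (hfpos : ∀ x : ℝ, 0 < x → 0 < f x) (hgpos : ∀ x : ℝ, 0 < x → 0 < g x)
    (hf : ∀ ⦃x y : ℝ⦄, 0 < x → x ≤ y → f y ≤ f x)
    (hg : ∀ ⦃x y : ℝ⦄, 0 < x → x ≤ y → g y ≤ g x)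
    (a : EuclideanSpace ℝ (Fin p)) :
    ∫⁻ x : EuclideanSpace ℝ (Fin p), ENNReal.ofReal (f ‖x + a‖ * g ‖x‖)
      ≤ ∫⁻ x : EuclideanSpace ℝ (Fin p), ENNReal.ofReal (f ‖x‖ * g ‖x‖) := by
  haveI : Nonempty (Fin p) := ⟨⟨0, hp⟩⟩
  set φ : ℝ → ℝ := Set.indicator (Set.Ioi (0:ℝ)) f with hφdef
  set ψ : ℝ → ℝ := Set.indicator (Set.Ioi (0:ℝ)) g with hψdef
  have hφm : Measurable φ := meas_ind f hf
  have hψm : Measurable ψ := meas_ind g hg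
  have hφ : ∀ ⦃x y : ℝ⦄, 0 < x → x ≤ y → φ y ≤ φ x := by
    intro x y hx hxy
    rw [hφdef, Set.indicator_of_mem (Set.mem_Ioi.2 hx),
      Set.indicator_of_mem (Set.mem_Ioi.2 (hx.trans_le hxy))]
    exact hf hx hxy
  have hψ : ∀ ⦃x y : ℝ⦄, 0 < x → x ≤ y → ψ y ≤ ψ x := by
    intro x y hx hxy
    rw [hψdef, Set.indicator_of_mem (Set.mem_Ioi.2 hx),
      Set.indicator_of_mem (Set.mem_Ioi.2 (hx.trans_le hxy))]
    exact hg hx hxy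
  -- a.e. rewriting
  have hae : ∀ᵐ x : EuclideanSpace ℝ (Fin p), x ≠ -a ∧ x ≠ 0 := by
    have h0 : volume ({-a} ∪ {0} : Set (EuclideanSpace ℝ (Fin p))) = 0 :=
      measure_union_null (measure_singleton _) (measure_singleton _)
    filter_upwards [measure_eq_zero_iff_ae_notMem.1 h0] with x hx
    exact ⟨fun h => hx (Or.inl h), fun h => hx (Or.inr h)⟩
  have key : ∀ b : EuclideanSpace ℝ (Fin p),
      ∫⁻ x : EuclideanSpace ℝ (Fin p), ENNReal.ofReal (f ‖x + b‖ * g ‖x‖)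
        = ∫⁻ st : ℝ × ℝ, volume {x : EuclideanSpace ℝ (Fin p) |
            0 < st.1 ∧ st.1 < φ ‖x + b‖ ∧ 0 < st.2 ∧ st.2 < ψ ‖x‖} := by
    intro b
    rw [← layer φ ψ hφm hψm b]
    refine lintegral_congr_ae ?_
    have haeb : ∀ᵐ x : EuclideanSpace ℝ (Fin p), x ≠ -b ∧ x ≠ 0 := by
      have h0 : volume ({-b} ∪ {0} : Set (EuclideanSpace ℝ (Fin p))) = 0 :=
        measure_union_null (measure_singleton _) (measure_singleton _)
      filter_upwards [measure_eq_zero_iff_ae_notMem.1 h0] with x hx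
      exact ⟨fun h => hx (Or.inl h), fun h => hx (Or.inr h)⟩
    filter_upwards [haeb] with x hx
    have h1 : (0:ℝ) < ‖x + b‖ := by
      rw [norm_pos_iff]
      intro h
      exact hx.1 (by linear_combination (norm := module) h)
    have h2 : (0:ℝ) < ‖x‖ := by rw [norm_pos_iff]; exact hx.2
    rw [ENNReal.ofReal_mul (hfpos _ h1).le, hφdef, hψdef,
      Set.indicator_of_mem (Set.mem_Ioi.2 h1), Set.indicator_of_mem (Set.mem_Ioi.2 h2)]
  have key0 : ∫⁻ x : EuclideanSpace ℝ (Fin p), ENNReal.ofReal (f ‖x‖ * g ‖x‖)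
      = ∫⁻ st : ℝ × ℝ, volume {x : EuclideanSpace ℝ (Fin p) |
          0 < st.1 ∧ st.1 < φ ‖x‖ ∧ 0 < st.2 ∧ st.2 < ψ ‖x‖} := by
    have := key 0
    simpa using this
  rw [key a, key0]
  refine lintegral_mono fun st => ?_
  rcases lt_or_ge 0 st.1 with hs | hs
  swap
  · have : {x : EuclideanSpace ℝ (Fin p) |
        0 < st.1 ∧ st.1 < φ ‖x + a‖ ∧ 0 < st.2 ∧ st.2 < ψ ‖x‖} = ∅ := by
      ext x; simp only [Set.mem_setOf_eq, Set.mem_empty_iff_false, iff_false]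
      intro h; exact absurd h.1 (not_lt.2 hs)
    rw [this]; simp
  rcases lt_or_ge 0 st.2 with ht | ht
  swap
  · have : {x : EuclideanSpace ℝ (Fin p) |
        0 < st.1 ∧ st.1 < φ ‖x + a‖ ∧ 0 < st.2 ∧ st.2 < ψ ‖x‖} = ∅ := by
      ext x; simp only [Set.mem_setOf_eq, Set.mem_empty_iff_false, iff_false]
      intro h; exact absurd h.2.2.1 (not_lt.2 ht)
    rw [this]; simp
  -- main geometric comparison
  set A : Set (EuclideanSpace ℝ (Fin p)) := {x | st.1 < φ ‖x‖} with hA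
  set B : Set (EuclideanSpace ℝ (Fin p)) := {x | st.2 < ψ ‖x‖} with hB
  have hEq1 : {x : EuclideanSpace ℝ (Fin p) |
      0 < st.1 ∧ st.1 < φ ‖x + a‖ ∧ 0 < st.2 ∧ st.2 < ψ ‖x‖}
      = ((· + a) ⁻¹' A) ∩ B := by
    ext x
    simp only [hA, hB, Set.mem_setOf_eq, Set.mem_inter_iff, Set.mem_preimage]
    tauto
  have hEq2 : {x : EuclideanSpace ℝ (Fin p) |
      0 < st.1 ∧ st.1 < φ ‖x‖ ∧ 0 < st.2 ∧ st.2 < ψ ‖x‖} = A ∩ B := by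
    ext x
    simp only [hA, hB, Set.mem_setOf_eq, Set.mem_inter_iff]
    tauto
  rw [hEq1, hEq2]
  have htrans : volume ((· + a) ⁻¹' A) = volume A := measure_preimage_add_right volume a A
  by_cases hsub : A \ {0} ⊆ B
  · calc volume (((· + a) ⁻¹' A) ∩ B) ≤ volume ((· + a) ⁻¹' A) :=
          measure_mono Set.inter_subset_left
      _ = volume A := htrans
      _ = volume (A \ {0}) := (measure_diff_null (measure_singleton 0)).symm
      _ ≤ volume (A ∩ B) :=
          measure_mono fun x hx => ⟨hx.1, hsub hx⟩
  · have hsub' : B \ {0} ⊆ A := by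
      rw [Set.not_subset] at hsub
      obtain ⟨x0, hx0A, hx0B⟩ := hsub
      intro y hy
      have hx0pos : (0:ℝ) < ‖x0‖ := norm_pos_iff.2 hx0A.2
      have hypos : (0:ℝ) < ‖y‖ := norm_pos_iff.2 hy.2
      have hx0nB : ψ ‖x0‖ ≤ st.2 := not_lt.1 hx0B
      have hyB : st.2 < ψ ‖y‖ := hy.1
      have hyx : ‖y‖ ≤ ‖x0‖ := by
        by_contra hc
        exact absurd (hψ hx0pos (not_le.1 hc).le) (not_le.2 (hx0nB.trans_lt hyB))
      exact (hx0A.1 : st.1 < φ ‖x0‖).trans_le (hφ hypos hyx)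
    calc volume (((· + a) ⁻¹' A) ∩ B) ≤ volume B := measure_mono Set.inter_subset_right
      _ = volume (B \ {0}) := (measure_diff_null (measure_singleton 0)).symm
      _ ≤ volume (A ∩ B) := measure_mono fun y hy => ⟨hsub' hy, hy.1⟩
end

section
/- Let μ be a probability measure on ℝ^p and let (X_1,…,X_n) be a μ-noisy sequence of ℝ^p-valued random variables. Then for all Borel measurable functions f_1,…,f_n : ℝ^p → [0,∞), E ∏_{k=1}^n f_k(X_k) ≤ ∏_{k=1}^n sup_{y∈ℝ^p} ∫_{ℝ^p} f_k(y+z) μ(dz), with both sides taken in [0, ∞]. -/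
open MeasureTheory ProbabilityTheory
open scoped ENNReal

/-- A finite sequence `X` of `ℝ^p`-valued random variables (on `(Ω, P)`) is `μ`-noisy if
there exist, on some probability space, two independent sequences `Y` and `Z` such that
`(Y₁+Z₁, …, Yₙ+Zₙ)` is distributed like `(X₁, …, Xₙ)` and `Z₁, …, Zₙ` are independent,
each with distribution `μ`. -/
def IsNoisy {p : ℕ} {Ω : Type*} [MeasurableSpace Ω] (P : Measure Ω)
    (μ : Measure (EuclideanSpace ℝ (Fin p))) {n : ℕ}
    (X : Fin n → Ω → EuclideanSpace ℝ (Fin p)) : Prop :=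
  ∃ (Ω' : Type) (_ : MeasurableSpace Ω') (P' : Measure Ω')
    (Y Z : Fin n → Ω' → EuclideanSpace ℝ (Fin p)),
    IsProbabilityMeasure P' ∧
    (∀ k, Measurable (Y k)) ∧ (∀ k, Measurable (Z k)) ∧
    IndepFun (fun ω k => Y k ω) (fun ω k => Z k ω) P' ∧
    iIndepFun Z P' ∧
    (∀ k, P'.map (Z k) = μ) ∧
    P'.map (fun ω k => Y k ω + Z k ω) = P.map (fun ω k => X k ω)

/-- The expectation of a finite product of independent `ℝ≥0∞`-valued random variables
is the product of the expectations. -/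
lemma lintegral_finset_prod_of_iIndepFun {Ω : Type*} [MeasurableSpace Ω] {μ : Measure Ω}
    [IsProbabilityMeasure μ] {ι : Type*} (s : Finset ι) (g : ι → Ω → ℝ≥0∞)
    (hg : ∀ i, Measurable (g i))
    (hind : iIndepFun g μ) :
    ∫⁻ ω, ∏ i ∈ s, g i ω ∂μ = ∏ i ∈ s, ∫⁻ ω, g i ω ∂μ := by
  classical
  induction s using Finset.induction with
  | empty => simp
  | @insert a s ha ih =>
    have hindep : IndepFun (∏ j ∈ s, g j) (g a) μ :=
      iIndepFun.indepFun_finset_prod_of_notMem hind hg ha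
    have hprod : Measurable (∏ j ∈ s, g j) := by
      rw [Finset.prod_fn]
      exact Finset.measurable_prod s fun i _ => hg i
    have key := lintegral_mul_eq_lintegral_mul_lintegral_of_indepFun hprod (hg a) hindep
    simp only [Pi.mul_apply, Finset.prod_apply] at key
    simp only [Finset.prod_insert ha]
    rw [← ih]
    calc ∫⁻ ω, g a ω * ∏ i ∈ s, g i ω ∂μ
        = ∫⁻ ω, (∏ j ∈ s, g j ω) * g a ω ∂μ := by simp_rw [mul_comm]
      _ = (∫⁻ ω, ∏ j ∈ s, g j ω ∂μ) * ∫⁻ ω, g a ω ∂μ := key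
      _ = (∫⁻ ω, g a ω ∂μ) * ∫⁻ ω, ∏ i ∈ s, g i ω ∂μ := mul_comm _ _

/-- If `(X₁,…,Xₙ)` is a `μ`-noisy sequence of `ℝ^p`-valued random variables,
then for all Borel measurable `f₁,…,fₙ : ℝ^p → [0,∞)`,
`E ∏ₖ fₖ(Xₖ) ≤ ∏ₖ sup_y ∫ fₖ(y+z) μ(dz)`, both sides in `[0,∞]`. -/
theorem stmt4 {p : ℕ} {Ω : Type*} [MeasurableSpace Ω] (P : Measure Ω)
    [IsProbabilityMeasure P]
    (μ : Measure (EuclideanSpace ℝ (Fin p))) [IsProbabilityMeasure μ] {n : ℕ}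
    (X : Fin n → Ω → EuclideanSpace ℝ (Fin p)) (hXmeas : ∀ k, Measurable (X k))
    (hX : IsNoisy P μ X)
    (f : Fin n → EuclideanSpace ℝ (Fin p) → ℝ)
    (hfmeas : ∀ k, Measurable (f k)) (hfpos : ∀ k x, 0 ≤ f k x) :
    ∫⁻ ω, ENNReal.ofReal (∏ k, f k (X k ω)) ∂P
      ≤ ∏ k, ⨆ y : EuclideanSpace ℝ (Fin p),
          ∫⁻ z, ENNReal.ofReal (f k (y + z)) ∂μ := by
  classical
  obtain ⟨Ω', mΩ', P', Y, Z, hP', hYm, hZm, hYZ, hZind, hZlaw, hlaw⟩ := hX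
  -- the target function on the product space
  set F : (Fin n → EuclideanSpace ℝ (Fin p)) → ℝ≥0∞ :=
    fun x => ∏ k, ENNReal.ofReal (f k (x k)) with hF
  have hFmeas : Measurable F := by
    refine Finset.measurable_prod _ fun k _ => ?_
    exact ((hfmeas k).comp (measurable_pi_apply k)).ennreal_ofReal
  have hXvec : Measurable (fun ω k => X k ω) := measurable_pi_lambda _ fun k => hXmeas k
  have hYvec : Measurable (fun ω k => Y k ω) := measurable_pi_lambda _ fun k => hYm k
  have hZvec : Measurable (fun ω k => Z k ω) := measurable_pi_lambda _ fun k => hZm k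
  have hYZvec : Measurable (fun ω k => Y k ω + Z k ω) :=
    measurable_pi_lambda _ fun k => (hYm k).add (hZm k)
  -- rewrite LHS as an integral over P'
  have step1 : ∫⁻ ω, ENNReal.ofReal (∏ k, f k (X k ω)) ∂P
      = ∫⁻ ω, F (fun k => Y k ω + Z k ω) ∂P' := by
    calc ∫⁻ ω, ENNReal.ofReal (∏ k, f k (X k ω)) ∂P
        = ∫⁻ ω, F (fun k => X k ω) ∂P := by
          refine lintegral_congr fun ω => ?_
          rw [hF]
          exact ENNReal.ofReal_prod_of_nonneg fun k _ => hfpos k _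
      _ = ∫⁻ x, F x ∂(P.map (fun ω k => X k ω)) := (lintegral_map hFmeas hXvec).symm
      _ = ∫⁻ x, F x ∂(P'.map (fun ω k => Y k ω + Z k ω)) := by rw [hlaw]
      _ = ∫⁻ ω, F (fun k => Y k ω + Z k ω) ∂P' := lintegral_map hFmeas hYZvec
  -- use independence of Y and Z to pass to a product measure
  set νY := P'.map (fun ω k => Y k ω) with hνYdef
  set νZ := P'.map (fun ω k => Z k ω) with hνZdef
  have hpair : P'.map (fun ω => ((fun k => Y k ω), (fun k => Z k ω))) = νY.prod νZ :=
    (indepFun_iff_map_prod_eq_prod_map_map hYvec.aemeasurable hZvec.aemeasurable).mp hYZ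
  have hHmeas : Measurable (fun yz : (Fin n → EuclideanSpace ℝ (Fin p)) ×
      (Fin n → EuclideanSpace ℝ (Fin p)) => F (fun k => yz.1 k + yz.2 k)) := by
    refine hFmeas.comp ?_
    exact measurable_pi_lambda _ fun k =>
      ((measurable_pi_apply k).comp measurable_fst).add
        ((measurable_pi_apply k).comp measurable_snd)
  have step2 : ∫⁻ ω, F (fun k => Y k ω + Z k ω) ∂P'
      = ∫⁻ y, ∫⁻ z, F (fun k => y k + z k) ∂νZ ∂νY := by
    calc ∫⁻ ω, F (fun k => Y k ω + Z k ω) ∂P'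
        = ∫⁻ yz, F (fun k => yz.1 k + yz.2 k)
            ∂(P'.map (fun ω => ((fun k => Y k ω), (fun k => Z k ω)))) :=
          (lintegral_map hHmeas (hYvec.prodMk hZvec)).symm
      _ = ∫⁻ yz, F (fun k => yz.1 k + yz.2 k) ∂(νY.prod νZ) := by rw [hpair]
      _ = ∫⁻ y, ∫⁻ z, F (fun k => y k + z k) ∂νZ ∂νY := lintegral_prod _ hHmeas.aemeasurable
  -- for each fixed y, factor the inner integral using independence of the Z's
  have inner : ∀ y : Fin n → EuclideanSpace ℝ (Fin p), ∫⁻ z, F (fun k => y k + z k) ∂νZ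
      = ∏ k, ∫⁻ z, ENNReal.ofReal (f k (y k + z)) ∂μ := by
    intro y
    have hGm : ∀ k : Fin n,
        Measurable (fun z : EuclideanSpace ℝ (Fin p) => ENNReal.ofReal (f k (y k + z))) :=
      fun k => ((hfmeas k).comp (measurable_const_add (y k))).ennreal_ofReal
    have hm : Measurable fun z : Fin n → EuclideanSpace ℝ (Fin p) => F (fun k => y k + z k) :=
      hFmeas.comp (measurable_pi_lambda _ fun k => (measurable_const_add (y k)).comp (measurable_pi_apply k))
    have h1 : ∫⁻ z, F (fun k => y k + z k) ∂νZ
        = ∫⁻ ω, ∏ k, ENNReal.ofReal (f k (y k + Z k ω)) ∂P' :=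
      lintegral_map hm hZvec
    have hind : iIndepFun
        (fun (k : Fin n) (ω : Ω') => ENNReal.ofReal (f k (y k + Z k ω))) P' :=
      hZind.comp (fun k z => ENNReal.ofReal (f k (y k + z))) hGm
    have h2 : ∫⁻ ω, ∏ k, ENNReal.ofReal (f k (y k + Z k ω)) ∂P'
        = ∏ k, ∫⁻ ω, ENNReal.ofReal (f k (y k + Z k ω)) ∂P' :=
      lintegral_finset_prod_of_iIndepFun Finset.univ
        (fun k ω => ENNReal.ofReal (f k (y k + Z k ω)))
        (fun k => (hGm k).comp (hZm k)) hind
    rw [h1, h2]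
    refine Finset.prod_congr rfl fun k _ => ?_
    rw [← hZlaw k, lintegral_map (hGm k) (hZm k)]
  -- bound each factor by its supremum
  have hνY : IsProbabilityMeasure νY := Measure.isProbabilityMeasure_map hYvec.aemeasurable
  rw [step1, step2]
  calc ∫⁻ y, ∫⁻ z, F (fun k => y k + z k) ∂νZ ∂νY
      ≤ ∫⁻ _, (∏ k, ⨆ y : EuclideanSpace ℝ (Fin p),
          ∫⁻ z, ENNReal.ofReal (f k (y + z)) ∂μ) ∂νY := by
        refine lintegral_mono fun y => ?_
        rw [inner y]
        exact Finset.prod_le_prod' fun k _ =>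
          le_iSup (fun y' => ∫⁻ z, ENNReal.ofReal (f k (y' + z)) ∂μ) (y k)
    _ = ∏ k, ⨆ y : EuclideanSpace ℝ (Fin p), ∫⁻ z, ENNReal.ofReal (f k (y + z)) ∂μ := by
        rw [lintegral_const, measure_univ, mul_one]
end

section
/- Let ψ : ℝ^p → ℝ and g : ℝ^p → ℝ be Borel measurable functions and μ a probability measure on ℝ^p satisfying log ∫_{ℝ^p} exp|ψ(x+y) − ψ(x−y)| μ_h(dx) ≤ g(y) for all y, h ∈ ℝ^p. Then E exp(Σ_{k=1}^n |ψ(X_k+Y_k) − ψ(X_k−Y_k)|) ≤ E exp(Σ_{k=1}^n g(Y_k)) for every pair of independent sequences X = (X_1,…,X_n) and Y = (Y_1,…,Y_n) of ℝ^p-valued random variables such that X is μ-noisy (the whole sequence X is independent of the whole sequence Y, while dependence is allowed within each sequence). Both expectations are taken in [0, ∞]. -/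
open MeasureTheory ProbabilityTheory
open scoped ENNReal

/-- Lintegral of a product of coordinate functions over a finite product of
probability measures equals the product of the lintegrals. -/
lemma lintegral_pi_prod_aux {α : Type} [MeasurableSpace α] (μ : Measure α)
    [IsProbabilityMeasure μ] :
    ∀ (n : ℕ) (f : Fin n → α → ℝ≥0∞), (∀ i, Measurable (f i)) →
      ∫⁻ x, ∏ i, f i (x i) ∂(Measure.pi fun _ : Fin n => μ) = ∏ i, ∫⁻ z, f i z ∂μ := by
  intro n
  induction n with
  | zero =>
      intro f hf
      simp
  | succ n ih =>
      intro f hf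
      have hmp := measurePreserving_piFinSuccAbove (fun _ : Fin (n + 1) => μ) 0
      have hmeasg : Measurable (fun q : α × (Fin n → α) =>
          f 0 q.1 * ∏ j, f j.succ (q.2 j)) :=
        ((hf 0).comp measurable_fst).mul
          (Finset.measurable_prod _ fun j _ =>
            (hf j.succ).comp ((measurable_pi_apply j).comp measurable_snd))
      calc ∫⁻ x, ∏ i, f i (x i) ∂(Measure.pi fun _ : Fin (n + 1) => μ)
          = ∫⁻ x, (fun q : α × (Fin n → α) => f 0 q.1 * ∏ j, f j.succ (q.2 j))
              (MeasurableEquiv.piFinSuccAbove (fun _ : Fin (n + 1) => α) 0 x)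
              ∂(Measure.pi fun _ : Fin (n + 1) => μ) := by
            refine lintegral_congr fun x => ?_
            simp [MeasurableEquiv.piFinSuccAbove_apply, Fin.zero_succAbove,
              Fin.prod_univ_succ, Fin.tail]
        _ = ∫⁻ q, f 0 q.1 * ∏ j, f j.succ (q.2 j)
              ∂(μ.prod (Measure.pi fun _ : Fin n => μ)) := hmp.lintegral_comp hmeasg
        _ = (∫⁻ z, f 0 z ∂μ) * ∫⁻ x, ∏ j, f j.succ (x j)
              ∂(Measure.pi fun _ : Fin n => μ) :=
            lintegral_prod_mul (hf 0).aemeasurable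
              (Finset.measurable_prod Finset.univ fun (j : Fin n) _ =>
                (hf j.succ).comp (measurable_pi_apply j)).aemeasurable
        _ = ∏ i, ∫⁻ z, f i z ∂μ := by
            rw [ih _ fun j => hf j.succ, Fin.prod_univ_succ]

/-- The joint law of an independent family of random variables, each with law `μ`,
is the product measure. -/
lemma map_eq_pi_aux {α : Type} [MeasurableSpace α] {Ω' : Type*} [MeasurableSpace Ω']
    (P' : Measure Ω') [IsProbabilityMeasure P'] {n : ℕ} (Z : Fin n → Ω' → α)
    (hZm : ∀ k, Measurable (Z k)) (hZindep : iIndepFun Z P')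
    (μ : Measure α) [IsProbabilityMeasure μ] (hZlaw : ∀ k, P'.map (Z k) = μ) :
    P'.map (fun ω k => Z k ω) = Measure.pi (fun _ : Fin n => μ) := by
  symm
  apply Measure.pi_eq
  intro s hs
  rw [Measure.map_apply (measurable_pi_lambda _ hZm) (MeasurableSet.univ_pi hs)]
  have hpre : (fun ω k => Z k ω) ⁻¹' Set.pi Set.univ s
      = ⋂ k ∈ Finset.univ, Z k ⁻¹' s k := by
    ext ω; simp [Set.mem_pi]
  rw [hpre, hZindep.measure_inter_preimage_eq_mul Finset.univ (fun k _ => hs k)]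
  refine Finset.prod_congr rfl fun k _ => ?_
  rw [← hZlaw k, Measure.map_apply (hZm k) (hs k)]

set_option maxHeartbeats 1000000

/-- Let `ψ, g : ℝ^p → ℝ` be Borel measurable and `μ` a probability measure
on `ℝ^p` with `log ∫ exp |ψ(x+y) − ψ(x−y)| μ_h(dx) ≤ g(y)` for all `y, h`
(equivalently `∫ exp |ψ(x+h+y) − ψ(x+h−y)| μ(dx) ≤ exp (g y)`).  Then
`E exp (Σₖ |ψ(Xₖ+Yₖ) − ψ(Xₖ−Yₖ)|) ≤ E exp (Σₖ g(Yₖ))`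
for every pair of independent sequences `X`, `Y` of `ℝ^p`-valued random variables such that
`X` is `μ`-noisy. -/
theorem stmt5 {p : ℕ}
    (ψ g : EuclideanSpace ℝ (Fin p) → ℝ) (hψ : Measurable ψ) (hg : Measurable g)
    (μ : Measure (EuclideanSpace ℝ (Fin p))) [IsProbabilityMeasure μ]
    (hcond : ∀ y h : EuclideanSpace ℝ (Fin p),
      ∫⁻ x, ENNReal.ofReal (Real.exp |ψ (x + h + y) - ψ (x + h - y)|) ∂μ
        ≤ ENNReal.ofReal (Real.exp (g y)))
    {Ω : Type*} [MeasurableSpace Ω] (P : Measure Ω) [IsProbabilityMeasure P] {n : ℕ}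
    (X Y : Fin n → Ω → EuclideanSpace ℝ (Fin p))
    (hXmeas : ∀ k, Measurable (X k)) (hYmeas : ∀ k, Measurable (Y k))
    (hindep : IndepFun (fun ω k => X k ω) (fun ω k => Y k ω) P)
    (hX : IsNoisy P μ X) :
    ∫⁻ ω, ENNReal.ofReal (Real.exp (∑ k, |ψ (X k ω + Y k ω) - ψ (X k ω - Y k ω)|)) ∂P
      ≤ ∫⁻ ω, ENNReal.ofReal (Real.exp (∑ k, g (Y k ω))) ∂P := by
  classical
  obtain ⟨Ω', mΩ', P', Y', Z, hP', hY'm, hZm, hYZ, hZiid, hZlaw, hlaw⟩ := hX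
  haveI := hP'
  have hXv : Measurable (fun ω => fun k => X k ω) := measurable_pi_lambda _ hXmeas
  have hYv : Measurable (fun ω => fun k => Y k ω) := measurable_pi_lambda _ hYmeas
  have hY'v : Measurable (fun ω => fun k => Y' k ω) := measurable_pi_lambda _ hY'm
  have hZv : Measurable (fun ω => fun k => Z k ω) := measurable_pi_lambda _ hZm
  have hWv : Measurable (fun ω => fun k => Y' k ω + Z k ω) :=
    measurable_pi_lambda _ fun k => (hY'm k).add (hZm k)
  haveI : IsProbabilityMeasure (P.map fun ω k => X k ω) :=
    Measure.isProbabilityMeasure_map hXv.aemeasurable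
  haveI : IsProbabilityMeasure (P.map fun ω k => Y k ω) :=
    Measure.isProbabilityMeasure_map hYv.aemeasurable
  haveI : IsProbabilityMeasure (P'.map fun ω k => Y' k ω) :=
    Measure.isProbabilityMeasure_map hY'v.aemeasurable
  haveI : IsProbabilityMeasure (P'.map fun ω k => Z k ω) :=
    Measure.isProbabilityMeasure_map hZv.aemeasurable
  set F : (Fin n → EuclideanSpace ℝ (Fin p)) → (Fin n → EuclideanSpace ℝ (Fin p)) → ℝ≥0∞ := fun x y =>
    ∏ k, ENNReal.ofReal (Real.exp |ψ (x k + y k) - ψ (x k - y k)|) with hF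
  have mF : Measurable (fun q : (Fin n → EuclideanSpace ℝ (Fin p)) × (Fin n → EuclideanSpace ℝ (Fin p)) => F q.1 q.2) := by
    apply Finset.measurable_prod
    intro k _
    have h1 : Measurable fun q : (Fin n → EuclideanSpace ℝ (Fin p)) × (Fin n → EuclideanSpace ℝ (Fin p)) => q.1 k + q.2 k :=
      ((measurable_pi_apply k).comp measurable_fst).add
        ((measurable_pi_apply k).comp measurable_snd)
    have h2 : Measurable fun q : (Fin n → EuclideanSpace ℝ (Fin p)) × (Fin n → EuclideanSpace ℝ (Fin p)) => q.1 k - q.2 k :=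
      ((measurable_pi_apply k).comp measurable_fst).sub
        ((measurable_pi_apply k).comp measurable_snd)
    exact (((hψ.comp h1).sub (hψ.comp h2)).abs.exp).ennreal_ofReal
  have hint : ∀ x y : Fin n → EuclideanSpace ℝ (Fin p),
      ENNReal.ofReal (Real.exp (∑ k, |ψ (x k + y k) - ψ (x k - y k)|)) = F x y := by
    intro x y
    rw [hF, Real.exp_sum, ENNReal.ofReal_prod_of_nonneg fun i _ => (Real.exp_pos _).le]
  -- the key inner bound
  have key : ∀ y : Fin n → EuclideanSpace ℝ (Fin p),
      ∫⁻ x, F x y ∂(P.map fun ω k => X k ω)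
        ≤ ∏ k, ENNReal.ofReal (Real.exp (g (y k))) := by
    intro y
    rw [← hlaw]
    set G : (Fin n → EuclideanSpace ℝ (Fin p)) × (Fin n → EuclideanSpace ℝ (Fin p)) → ℝ≥0∞ := fun q =>
      ∏ k, ENNReal.ofReal
        (Real.exp |ψ (q.2 k + q.1 k + y k) - ψ (q.2 k + q.1 k - y k)|) with hG
    have mG : Measurable G := by
      apply Finset.measurable_prod
      intro k _
      have h1 : Measurable fun q : (Fin n → EuclideanSpace ℝ (Fin p)) × (Fin n → EuclideanSpace ℝ (Fin p)) => q.2 k + q.1 k :=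
        ((measurable_pi_apply k).comp measurable_snd).add
          ((measurable_pi_apply k).comp measurable_fst)
      exact (((hψ.comp (h1.add measurable_const)).sub
        (hψ.comp (h1.sub measurable_const))).abs.exp).ennreal_ofReal
    have mFy : Measurable fun x : Fin n → EuclideanSpace ℝ (Fin p) => F x y := by
      apply Finset.measurable_prod
      intro k _
      exact (((hψ.comp ((measurable_pi_apply k).add measurable_const)).sub
        (hψ.comp ((measurable_pi_apply k).sub measurable_const))).abs.exp).ennreal_ofReal
    calc ∫⁻ x, F x y ∂(P'.map fun ω k => Y' k ω + Z k ω)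
        = ∫⁻ ω', F (fun k => Y' k ω' + Z k ω') y ∂P' := lintegral_map mFy hWv
      _ = ∫⁻ ω', G ((fun k => Y' k ω'), fun k => Z k ω') ∂P' := by
          refine lintegral_congr fun ω' => ?_
          simp only [hF, hG]
          exact Finset.prod_congr rfl fun k _ => by
            rw [add_comm (Y' k ω') (Z k ω')]
      _ = ∫⁻ q, G q ∂(P'.map fun ω' => ((fun k => Y' k ω'), fun k => Z k ω')) :=
          (lintegral_map mG (hY'v.prodMk hZv)).symm
      _ = ∫⁻ q, G q ∂((P'.map fun ω k => Y' k ω).prod (P'.map fun ω k => Z k ω)) := by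
          rw [(indepFun_iff_map_prod_eq_prod_map_map hY'v.aemeasurable
            hZv.aemeasurable).mp hYZ]
      _ = ∫⁻ a, ∫⁻ b, G (a, b) ∂(P'.map fun ω k => Z k ω)
            ∂(P'.map fun ω k => Y' k ω) := lintegral_prod _ mG.aemeasurable
      _ = ∫⁻ a, ∫⁻ b, G (a, b) ∂(Measure.pi fun _ : Fin n => μ)
            ∂(P'.map fun ω k => Y' k ω) := by
          rw [map_eq_pi_aux P' Z hZm hZiid μ hZlaw]
      _ ≤ ∫⁻ _, ∏ k, ENNReal.ofReal (Real.exp (g (y k)))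
            ∂(P'.map fun ω k => Y' k ω) := by
          refine lintegral_mono fun a => ?_
          have hmi : ∀ k : Fin n, Measurable fun z : EuclideanSpace ℝ (Fin p) =>
              ENNReal.ofReal (Real.exp |ψ (z + a k + y k) - ψ (z + a k - y k)|) := by
            intro k
            have h1 : Measurable fun z : EuclideanSpace ℝ (Fin p) => z + a k :=
              measurable_id.add measurable_const
            exact (((hψ.comp (h1.add measurable_const)).sub
              (hψ.comp (h1.sub measurable_const))).abs.exp).ennreal_ofReal
          have heq := lintegral_pi_prod_aux μ n
            (fun k z => ENNReal.ofReal
              (Real.exp |ψ (z + a k + y k) - ψ (z + a k - y k)|)) hmi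
          calc ∫⁻ b, G (a, b) ∂(Measure.pi fun _ : Fin n => μ)
              = ∏ k, ∫⁻ z, ENNReal.ofReal
                  (Real.exp |ψ (z + a k + y k) - ψ (z + a k - y k)|) ∂μ := heq
            _ ≤ ∏ k, ENNReal.ofReal (Real.exp (g (y k))) :=
                Finset.prod_le_prod' fun k _ => hcond (y k) (a k)
      _ = ∏ k, ENNReal.ofReal (Real.exp (g (y k))) := by
          rw [lintegral_const, measure_univ, mul_one]
  -- assemble
  have mRy : Measurable fun y : Fin n → EuclideanSpace ℝ (Fin p) =>
      ∏ k, ENNReal.ofReal (Real.exp (g (y k))) :=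
    Finset.measurable_prod _ fun k _ =>
      ((hg.comp (measurable_pi_apply k)).exp).ennreal_ofReal
  have mF2 : Measurable (fun q : (Fin n → EuclideanSpace ℝ (Fin p)) × (Fin n → EuclideanSpace ℝ (Fin p)) => F q.2 q.1) := by
    apply Finset.measurable_prod
    intro k _
    have h1 : Measurable fun q : (Fin n → EuclideanSpace ℝ (Fin p)) × (Fin n → EuclideanSpace ℝ (Fin p)) => q.2 k + q.1 k :=
      ((measurable_pi_apply k).comp measurable_snd).add
        ((measurable_pi_apply k).comp measurable_fst)
    have h2 : Measurable fun q : (Fin n → EuclideanSpace ℝ (Fin p)) × (Fin n → EuclideanSpace ℝ (Fin p)) => q.2 k - q.1 k :=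
      ((measurable_pi_apply k).comp measurable_snd).sub
        ((measurable_pi_apply k).comp measurable_fst)
    exact (((hψ.comp h1).sub (hψ.comp h2)).abs.exp).ennreal_ofReal
  calc ∫⁻ ω, ENNReal.ofReal
        (Real.exp (∑ k, |ψ (X k ω + Y k ω) - ψ (X k ω - Y k ω)|)) ∂P
      = ∫⁻ ω, F (fun k => X k ω) (fun k => Y k ω) ∂P :=
        lintegral_congr fun ω => hint _ _
    _ = ∫⁻ q, F q.2 q.1 ∂(P.map fun ω => ((fun k => Y k ω), fun k => X k ω)) :=
        (lintegral_map mF2 (hYv.prodMk hXv)).symm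
    _ = ∫⁻ q, F q.2 q.1 ∂((P.map fun ω k => Y k ω).prod (P.map fun ω k => X k ω)) := by
        rw [(indepFun_iff_map_prod_eq_prod_map_map hYv.aemeasurable
          hXv.aemeasurable).mp hindep.symm]
    _ = ∫⁻ y, ∫⁻ x, F x y ∂(P.map fun ω k => X k ω) ∂(P.map fun ω k => Y k ω) :=
        lintegral_prod _ mF2.aemeasurable
    _ ≤ ∫⁻ y, ∏ k, ENNReal.ofReal (Real.exp (g (y k))) ∂(P.map fun ω k => Y k ω) :=
        lintegral_mono fun y => key y
    _ = ∫⁻ ω, ∏ k, ENNReal.ofReal (Real.exp (g (Y k ω))) ∂P := lintegral_map mRy hYv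
    _ = ∫⁻ ω, ENNReal.ofReal (Real.exp (∑ k, g (Y k ω))) ∂P := by
        refine lintegral_congr fun ω => ?_
        rw [Real.exp_sum, ENNReal.ofReal_prod_of_nonneg fun i _ => (Real.exp_pos _).le]
end

section
/- Let p ≥ 2 and σ ∈ (0,∞), and let μ be the rotation-invariant Gaussian measure on ℝ^p with density (2πσ²)^{-p/2} exp(−|x|²/(2σ²)) with respect to Lebesgue measure. Then there exists a constant C (depending only on p and σ) such that for all y, h ∈ ℝ^p, ∫_{ℝ^p} exp| log|x+y| − log|x−y| | μ_h(dx) ≤ exp(C|y|). -/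
open MeasureTheory Metric
open scoped ENNReal

section Aux

variable (p : ℕ)

/-- Covering of the punctured unit ball by dyadic annuli. -/
lemma aux_cover {x : EuclideanSpace ℝ (Fin p)} (h0 : x ≠ 0) (h1 : ‖x‖ < 1) :
    ∃ n : ℕ, ((2:ℝ)⁻¹) ^ (n + 1) ≤ ‖x‖ ∧ ‖x‖ < ((2:ℝ)⁻¹) ^ n := by
  have hx : 0 < ‖x‖ := norm_pos_iff.2 h0
  have hex : ∃ n : ℕ, ((2:ℝ)⁻¹) ^ (n + 1) ≤ ‖x‖ := by
    obtain ⟨m, hm⟩ := exists_pow_lt_of_lt_one hx (by norm_num : (2:ℝ)⁻¹ < 1)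
    exact ⟨m, le_of_lt (lt_of_le_of_lt (pow_le_pow_of_le_one (by norm_num) (by norm_num) (Nat.le_succ m)) hm)⟩
  classical
  let n := Nat.find hex
  refine ⟨n, Nat.find_spec hex, ?_⟩
  rcases Nat.eq_zero_or_pos n with hn | hn
  · simpa [hn] using h1
  · have := Nat.find_min hex (m := n - 1) (by omega)
    push_neg at this
    calc ‖x‖ < ((2:ℝ)⁻¹) ^ (n - 1 + 1) := this
    _ = ((2:ℝ)⁻¹) ^ n := by congr 1; omega

lemma aux_M_lt_top (hp : 2 ≤ p) :
    ∫⁻ x in ball (0 : EuclideanSpace ℝ (Fin p)) 1, (ENNReal.ofReal ‖x‖)⁻¹ < ⊤ := by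
  haveI : Nonempty (Fin p) := ⟨⟨0, by omega⟩⟩
  have hdim : Module.finrank ℝ (EuclideanSpace ℝ (Fin p)) = p := finrank_euclideanSpace_fin
  set V := volume (ball (0 : EuclideanSpace ℝ (Fin p)) 1) with hV
  have hVlt : V < ⊤ := measure_ball_lt_top
  set A : ℕ → Set (EuclideanSpace ℝ (Fin p)) :=
    fun n => ball 0 (((2:ℝ)⁻¹) ^ n) \ ball 0 (((2:ℝ)⁻¹) ^ (n + 1)) with hA
  have hcover : ball (0 : EuclideanSpace ℝ (Fin p)) 1 \ {0} ⊆ ⋃ n, A n := by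
    rintro x ⟨hx1, hx0⟩
    obtain ⟨n, h1, h2⟩ := aux_cover p (by simpa using hx0) (by simpa using hx1)
    exact Set.mem_iUnion.2 ⟨n, ⟨mem_ball_zero_iff.2 h2,
      fun hc => absurd (mem_ball_zero_iff.1 hc) (not_lt.2 h1)⟩⟩
  have hstep : ∀ n, ∫⁻ x in A n, (ENNReal.ofReal ‖x‖)⁻¹ ≤ 2 * V * (2⁻¹ : ℝ≥0∞) ^ n := by
    intro n
    have hr : (0:ℝ) < ((2:ℝ)⁻¹) ^ (n + 1) := by positivity
    have hAmeas : MeasurableSet (A n) := measurableSet_ball.diff measurableSet_ball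
    have hb : ∀ x ∈ A n, (ENNReal.ofReal ‖x‖)⁻¹ ≤ (ENNReal.ofReal (((2:ℝ)⁻¹) ^ (n+1)))⁻¹ := by
      rintro x ⟨-, hx⟩
      rw [mem_ball_zero_iff, not_lt] at hx
      exact ENNReal.inv_le_inv.2 (ENNReal.ofReal_le_ofReal hx)
    calc ∫⁻ x in A n, (ENNReal.ofReal ‖x‖)⁻¹
        ≤ ∫⁻ _ in A n, (ENNReal.ofReal (((2:ℝ)⁻¹) ^ (n+1)))⁻¹ := setLIntegral_mono' hAmeas hb
      _ = (ENNReal.ofReal (((2:ℝ)⁻¹) ^ (n+1)))⁻¹ * volume (A n) := setLIntegral_const _ _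
      _ ≤ (ENNReal.ofReal (((2:ℝ)⁻¹) ^ (n+1)))⁻¹ *
            (ENNReal.ofReal ((((2:ℝ)⁻¹) ^ n) ^ p) * V) := by
          gcongr
          have hball := Measure.addHaar_ball (volume : Measure (EuclideanSpace ℝ (Fin p)))
            0 (by positivity : (0:ℝ) ≤ ((2:ℝ)⁻¹) ^ n)
          rw [hdim] at hball
          exact le_trans (measure_mono Set.diff_subset) (le_of_eq hball)
      _ ≤ 2 * V * (2⁻¹ : ℝ≥0∞) ^ n := by
          have e1 : (ENNReal.ofReal (((2:ℝ)⁻¹) ^ (n+1)))⁻¹ = ENNReal.ofReal ((2:ℝ) ^ (n+1)) := by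
            rw [← ENNReal.ofReal_inv_of_pos hr, inv_pow, inv_inv]
          have hreal : (2:ℝ) ^ (n+1) * (((2:ℝ)⁻¹) ^ n) ^ p ≤ 2 * ((2:ℝ)⁻¹) ^ n := by
            have h1 : (((2:ℝ)⁻¹) ^ n) ^ p ≤ (((2:ℝ)⁻¹) ^ n) ^ 2 :=
              pow_le_pow_of_le_one (by positivity) (pow_le_one₀ (by norm_num) (by norm_num)) hp
            have h2 : (2:ℝ) ^ (n+1) * (((2:ℝ)⁻¹) ^ n) ^ 2 = 2 * ((2:ℝ)⁻¹) ^ n := by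
              field_simp
              rw [pow_succ, mul_right_comm, ← mul_pow]; norm_num
            calc (2:ℝ) ^ (n+1) * (((2:ℝ)⁻¹) ^ n) ^ p ≤ (2:ℝ) ^ (n+1) * (((2:ℝ)⁻¹) ^ n) ^ 2 := by
                  gcongr
              _ = 2 * ((2:ℝ)⁻¹) ^ n := h2
          have e2 : ENNReal.ofReal (2 * ((2:ℝ)⁻¹) ^ n) = 2 * (2⁻¹ : ℝ≥0∞) ^ n := by
            rw [ENNReal.ofReal_mul (by norm_num), ENNReal.ofReal_pow (by norm_num),
              ENNReal.ofReal_inv_of_pos (by norm_num)]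
            norm_num
          calc (ENNReal.ofReal (((2:ℝ)⁻¹) ^ (n+1)))⁻¹ *
                (ENNReal.ofReal ((((2:ℝ)⁻¹) ^ n) ^ p) * V)
              = ENNReal.ofReal ((2:ℝ) ^ (n+1) * (((2:ℝ)⁻¹) ^ n) ^ p) * V := by
                rw [e1, ← mul_assoc, ← ENNReal.ofReal_mul (by positivity)]
            _ ≤ ENNReal.ofReal (2 * ((2:ℝ)⁻¹) ^ n) * V := by
                exact mul_le_mul_left (ENNReal.ofReal_le_ofReal hreal) V
            _ = 2 * V * (2⁻¹ : ℝ≥0∞) ^ n := by rw [e2]; ring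
  calc ∫⁻ x in ball (0 : EuclideanSpace ℝ (Fin p)) 1, (ENNReal.ofReal ‖x‖)⁻¹
      = ∫⁻ x in ball (0 : EuclideanSpace ℝ (Fin p)) 1 \ {0}, (ENNReal.ofReal ‖x‖)⁻¹ := by
        refine (setLIntegral_congr ?_).symm
        refine diff_ae_eq_self.2 (measure_mono_null ?_ (measure_singleton (0 : EuclideanSpace ℝ (Fin p))))
        exact Set.inter_subset_right
    _ ≤ ∫⁻ x in ⋃ n, A n, (ENNReal.ofReal ‖x‖)⁻¹ :=
        lintegral_mono_set hcover
    _ ≤ ∑' n, ∫⁻ x in A n, (ENNReal.ofReal ‖x‖)⁻¹ := lintegral_iUnion_le _ _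
    _ ≤ ∑' n, 2 * V * (2⁻¹ : ℝ≥0∞) ^ n := ENNReal.tsum_le_tsum hstep
    _ = 2 * V * ∑' n, (2⁻¹ : ℝ≥0∞) ^ n := ENNReal.tsum_mul_left
    _ < ⊤ := by
        rw [ENNReal.tsum_geometric, ENNReal.one_sub_inv_two, inv_inv]
        exact ENNReal.mul_lt_top (ENNReal.mul_lt_top (by simp) hVlt) (by simp)

/-- Translation invariance of the singular integral over a unit ball. -/
lemma aux_translate (z : EuclideanSpace ℝ (Fin p)) :
    ∫⁻ x in ball z 1, (ENNReal.ofReal ‖x - z‖)⁻¹ =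
      ∫⁻ x in ball (0 : EuclideanSpace ℝ (Fin p)) 1, (ENNReal.ofReal ‖x‖)⁻¹ := by
  set F : EuclideanSpace ℝ (Fin p) → ℝ≥0∞ :=
    (ball (0 : EuclideanSpace ℝ (Fin p)) 1).indicator (fun u => (ENNReal.ofReal ‖u‖)⁻¹) with hF
  have key : ∀ x : EuclideanSpace ℝ (Fin p),
      (ball z 1).indicator (fun x => (ENNReal.ofReal ‖x - z‖)⁻¹) x = F (x - z) := by
    intro x
    by_cases hx : x ∈ ball z 1
    · have hx' : x - z ∈ ball (0 : EuclideanSpace ℝ (Fin p)) 1 := by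
        rw [mem_ball_zero_iff]
        simpa [dist_eq_norm] using hx
      simp [hF, Set.indicator_of_mem, hx, hx']
    · have hx' : x - z ∉ ball (0 : EuclideanSpace ℝ (Fin p)) 1 := by
        rw [mem_ball_zero_iff]
        intro hc
        exact hx (by simpa [dist_eq_norm] using hc)
      simp [hF, Set.indicator_of_notMem, hx, hx']
  rw [← lintegral_indicator measurableSet_ball, ← lintegral_indicator measurableSet_ball]
  calc ∫⁻ x, (ball z 1).indicator (fun x => (ENNReal.ofReal ‖x - z‖)⁻¹) x
      = ∫⁻ x, F (x - z) := by simp_rw [key]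
    _ = ∫⁻ x, F x := lintegral_sub_right_eq_self F z

/-- The Gaussian density integrates to `1`. -/
lemma aux_mass (hp : 2 ≤ p) (σ : ℝ) (hσ : 0 < σ) :
    ∫⁻ x : EuclideanSpace ℝ (Fin p), ENNReal.ofReal ((2 * Real.pi * σ ^ 2) ^ (-(p : ℝ) / 2) *
      Real.exp (-‖x‖ ^ 2 / (2 * σ ^ 2))) = 1 := by
  haveI : Nonempty (Fin p) := ⟨⟨0, by omega⟩⟩
  have hπ : (0:ℝ) < 2 * Real.pi * σ ^ 2 := by positivity
  set c' : ℝ := (2 * Real.pi * σ ^ 2) ^ (-(p : ℝ) / 2) with hc'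
  have hc'pos : 0 < c' := Real.rpow_pos_of_pos hπ _
  set b : ℝ := (2 * σ ^ 2)⁻¹ with hb
  have hbpos : (0:ℝ) < b := by positivity
  have hexp : ∀ x : EuclideanSpace ℝ (Fin p),
      -‖x‖ ^ 2 / (2 * σ ^ 2) = -b * ‖x‖ ^ 2 := by
    intro x; rw [hb]; field_simp
  have hint : Integrable (fun x : EuclideanSpace ℝ (Fin p) => Real.exp (-b * ‖x‖ ^ 2)) := by
    have h := (GaussianFourier.integrable_cexp_neg_mul_sq_norm_add
      (V := EuclideanSpace ℝ (Fin p)) (b := (b:ℂ)) (by simpa using hbpos) 0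
      (0 : EuclideanSpace ℝ (Fin p))).norm
    simpa [Complex.norm_exp, ← Complex.ofReal_pow] using h
  have hval : ∫ x : EuclideanSpace ℝ (Fin p), Real.exp (-b * ‖x‖ ^ 2) =
      (2 * Real.pi * σ ^ 2) ^ ((p : ℝ) / 2) := by
    rw [GaussianFourier.integral_rexp_neg_mul_sq_norm hbpos]
    rw [finrank_euclideanSpace_fin]
    congr 1
    rw [hb]
    field_simp
  simp_rw [hexp]
  rw [← ofReal_integral_eq_lintegral_ofReal (hint.const_mul c')
    (Filter.Eventually.of_forall fun x => by positivity)]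
  rw [integral_const_mul, hval, hc', ← Real.rpow_add hπ,
    show -(p:ℝ)/2 + (p:ℝ)/2 = 0 by ring, Real.rpow_zero, ENNReal.ofReal_one]

end Aux

/-- Let `p ≥ 2`, `σ ∈ (0,∞)`, and let `μ` be the rotation-invariant
Gaussian measure on `ℝ^p` with density `(2πσ²)^{-p/2} exp(−|x|²/(2σ²))` with respect to
Lebesgue measure.  Then there is a constant `C` (depending only on `p` and `σ`) such that
for all `y, h ∈ ℝ^p`,
`∫ exp |log|x+y| − log|x−y|| μ_h(dx) ≤ exp (C |y|)`
(the shifted measure `μ_h` being realized by evaluating the integrand at `x + h`). -/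
theorem stmt6 (p : ℕ) (hp : 2 ≤ p) (σ : ℝ) (hσ : 0 < σ) :
    ∃ C : ℝ, ∀ y h : EuclideanSpace ℝ (Fin p),
      ∫⁻ x, ENNReal.ofReal (Real.exp |Real.log ‖x + h + y‖ - Real.log ‖x + h - y‖|)
          ∂(volume.withDensity fun x : EuclideanSpace ℝ (Fin p) =>
              ENNReal.ofReal ((2 * Real.pi * σ ^ 2) ^ (-(p : ℝ) / 2) *
                Real.exp (-‖x‖ ^ 2 / (2 * σ ^ 2))))
        ≤ ENNReal.ofReal (Real.exp (C * ‖y‖)) := by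
  haveI : Nonempty (Fin p) := ⟨⟨0, by omega⟩⟩
  have hπ : (0:ℝ) < 2 * Real.pi * σ ^ 2 := by positivity
  set c' : ℝ := (2 * Real.pi * σ ^ 2) ^ (-(p : ℝ) / 2) with hc'
  have hc'pos : 0 < c' := Real.rpow_pos_of_pos hπ _
  set ρ : EuclideanSpace ℝ (Fin p) → ℝ≥0∞ :=
    fun x => ENNReal.ofReal (c' * Real.exp (-‖x‖ ^ 2 / (2 * σ ^ 2))) with hρ
  have hρmeas : Measurable ρ := by
    apply ENNReal.measurable_ofReal.comp
    exact (continuous_const.mul (Real.continuous_exp.comp (by fun_prop))).measurable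
  set ν := volume.withDensity ρ with hν
  have hρmass : ∫⁻ x, ρ x = 1 := aux_mass p hp σ hσ
  have hmass : ∫⁻ _, (1:ℝ≥0∞) ∂ν = 1 := by
    rw [lintegral_one, hν, withDensity_apply _ MeasurableSet.univ, Measure.restrict_univ]
    exact hρmass
  set M := ∫⁻ x in ball (0 : EuclideanSpace ℝ (Fin p)) 1, (ENNReal.ofReal ‖x‖)⁻¹ with hM
  set B : ℝ≥0∞ := ENNReal.ofReal c' * M + 1 with hB
  have hBne : B ≠ ⊤ := by
    rw [hB]
    exact ENNReal.add_ne_top.2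
      ⟨ENNReal.mul_ne_top ENNReal.ofReal_ne_top (aux_M_lt_top p hp).ne, ENNReal.one_ne_top⟩
  have hρle : ∀ x : EuclideanSpace ℝ (Fin p), ρ x ≤ ENNReal.ofReal c' := by
    intro x
    apply ENNReal.ofReal_le_ofReal
    have h1 : Real.exp (-‖x‖ ^ 2 / (2 * σ ^ 2)) ≤ 1 := by
      rw [Real.exp_le_one_iff]
      have : (0:ℝ) ≤ ‖x‖ ^ 2 / (2 * σ ^ 2) := by positivity
      linarith [neg_div (2 * σ ^ 2) (‖x‖ ^ 2)]
    nlinarith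
  have hJ : ∀ z : EuclideanSpace ℝ (Fin p),
      ∫⁻ x, (ENNReal.ofReal ‖x - z‖)⁻¹ ∂ν ≤ B := by
    intro z
    have hg : Measurable fun x : EuclideanSpace ℝ (Fin p) => (ENNReal.ofReal ‖x - z‖)⁻¹ :=
      (ENNReal.measurable_ofReal.comp
        (continuous_norm.comp (continuous_id.sub continuous_const)).measurable).inv
    rw [hν, lintegral_withDensity_eq_lintegral_mul volume hρmeas hg]
    simp only [Pi.mul_apply]
    rw [← lintegral_add_compl (fun x => ρ x * (ENNReal.ofReal ‖x - z‖)⁻¹)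
      (measurableSet_ball (x := z) (ε := (1:ℝ)))]
    have h1 : ∫⁻ x in ball z 1, ρ x * (ENNReal.ofReal ‖x - z‖)⁻¹ ≤ ENNReal.ofReal c' * M := by
      calc ∫⁻ x in ball z 1, ρ x * (ENNReal.ofReal ‖x - z‖)⁻¹
          ≤ ∫⁻ x in ball z 1, ENNReal.ofReal c' * (ENNReal.ofReal ‖x - z‖)⁻¹ :=
            setLIntegral_mono' measurableSet_ball fun x _ => mul_le_mul_left (hρle x) _
        _ = ENNReal.ofReal c' * ∫⁻ x in ball z 1, (ENNReal.ofReal ‖x - z‖)⁻¹ :=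
            lintegral_const_mul' _ _ ENNReal.ofReal_ne_top
        _ = ENNReal.ofReal c' * M := by rw [aux_translate p z]
    have h2 : ∫⁻ x in (ball z 1)ᶜ, ρ x * (ENNReal.ofReal ‖x - z‖)⁻¹ ≤ 1 := by
      have hb : ∀ x ∈ (ball z 1)ᶜ, ρ x * (ENNReal.ofReal ‖x - z‖)⁻¹ ≤ ρ x := by
        intro x hx
        have hd : (1:ℝ) ≤ ‖x - z‖ := by
          have := hx
          simp only [Set.mem_compl_iff, mem_ball, not_lt, dist_eq_norm] at this
          exact this
        have hinv : (ENNReal.ofReal ‖x - z‖)⁻¹ ≤ 1 := by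
          rw [ENNReal.inv_le_one]
          exact ENNReal.one_le_ofReal.2 hd
        calc ρ x * (ENNReal.ofReal ‖x - z‖)⁻¹ ≤ ρ x * 1 := mul_le_mul_right hinv _
          _ = ρ x := mul_one _
      calc ∫⁻ x in (ball z 1)ᶜ, ρ x * (ENNReal.ofReal ‖x - z‖)⁻¹
          ≤ ∫⁻ x in (ball z 1)ᶜ, ρ x := setLIntegral_mono' measurableSet_ball.compl hb
        _ ≤ ∫⁻ x, ρ x := setLIntegral_le_lintegral _ _
        _ = 1 := hρmass
    rw [hB]
    exact add_le_add h1 h2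
  refine ⟨4 * B.toReal, fun y h => ?_⟩
  have hpt : ∀ x : EuclideanSpace ℝ (Fin p),
      ENNReal.ofReal (Real.exp |Real.log ‖x + h + y‖ - Real.log ‖x + h - y‖|) ≤
      1 + ENNReal.ofReal (2 * ‖y‖) *
        ((ENNReal.ofReal ‖x + h + y‖)⁻¹ + (ENNReal.ofReal ‖x + h - y‖)⁻¹) := by
    intro x
    by_cases hy : y = 0
    · have hab : x + h + y = x + h - y := by rw [hy]; abel
      rw [hab, sub_self, abs_zero, Real.exp_zero, ENNReal.ofReal_one]
      exact le_add_of_nonneg_right zero_le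
    · have hy0 : (0:ℝ) < ‖y‖ := norm_pos_iff.2 hy
      have hy2 : (0:ℝ) < 2 * ‖y‖ := by linarith
      have hne : ENNReal.ofReal (2 * ‖y‖) ≠ 0 := by
        simp only [ne_eq, ENNReal.ofReal_eq_zero, not_le]
        exact hy2
      by_cases ha : ‖x + h + y‖ = 0
      · have e : (ENNReal.ofReal ‖x + h + y‖)⁻¹ = ⊤ := by simp [ha]
        rw [e, top_add, ENNReal.mul_top hne, add_top]
        exact le_top
      by_cases hb : ‖x + h - y‖ = 0
      · have e : (ENNReal.ofReal ‖x + h - y‖)⁻¹ = ⊤ := by simp [hb]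
        rw [e, add_top, ENNReal.mul_top hne, add_top]
        exact le_top
      · have ha' : 0 < ‖x + h + y‖ := lt_of_le_of_ne (norm_nonneg _) (Ne.symm ha)
        have hb' : 0 < ‖x + h - y‖ := lt_of_le_of_ne (norm_nonneg _) (Ne.symm hb)
        set a := ‖x + h + y‖
        set b := ‖x + h - y‖
        have h2y : ‖(x + h + y) - (x + h - y)‖ ≤ 2 * ‖y‖ := by
          have e : (x + h + y) - (x + h - y) = y + y := by abel
          rw [e]
          calc ‖y + y‖ ≤ ‖y‖ + ‖y‖ := norm_add_le _ _
            _ = 2 * ‖y‖ := (two_mul _).symm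
        have habs : |a - b| ≤ 2 * ‖y‖ :=
          le_trans (abs_norm_sub_norm_le _ _) h2y
        have hab : a ≤ b + 2 * ‖y‖ := by
          have := abs_le.1 habs
          linarith [this.2]
        have hba : b ≤ a + 2 * ‖y‖ := by
          have := abs_le.1 habs
          linarith [this.1]
        have hia : (0:ℝ) ≤ a⁻¹ := by positivity
        have hib : (0:ℝ) ≤ b⁻¹ := by positivity
        have hreal : Real.exp |Real.log a - Real.log b| ≤ 1 + 2 * ‖y‖ * (a⁻¹ + b⁻¹) := by
          have hbb : b * b⁻¹ = 1 := mul_inv_cancel₀ hb'.ne'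
          have haa : a * a⁻¹ = 1 := mul_inv_cancel₀ ha'.ne'
          rcases abs_cases (Real.log a - Real.log b) with ⟨heq, -⟩ | ⟨heq, -⟩
          · rw [heq, Real.exp_sub, Real.exp_log ha', Real.exp_log hb']
            rw [div_le_iff₀ hb']
            nlinarith [mul_nonneg (mul_nonneg hy2.le hia) hb'.le]
          · rw [heq, neg_sub, Real.exp_sub, Real.exp_log hb', Real.exp_log ha']
            rw [div_le_iff₀ ha']
            nlinarith [mul_nonneg (mul_nonneg hy2.le hib) ha'.le]
        have hEN : ENNReal.ofReal (1 + 2 * ‖y‖ * (a⁻¹ + b⁻¹)) =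
            1 + ENNReal.ofReal (2 * ‖y‖) * ((ENNReal.ofReal a)⁻¹ + (ENNReal.ofReal b)⁻¹) := by
          rw [ENNReal.ofReal_add (by norm_num) (by positivity), ENNReal.ofReal_one,
            ENNReal.ofReal_mul (by positivity), ENNReal.ofReal_add hia hib,
            ENNReal.ofReal_inv_of_pos ha', ENNReal.ofReal_inv_of_pos hb']
        rw [← hEN]
        exact ENNReal.ofReal_le_ofReal hreal
  have hg1 : Measurable fun x : EuclideanSpace ℝ (Fin p) => (ENNReal.ofReal ‖x + h + y‖)⁻¹ :=
    (ENNReal.measurable_ofReal.comp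
      (continuous_norm.comp ((continuous_id.add continuous_const).add continuous_const)).measurable).inv
  have hJ1 : ∫⁻ x, (ENNReal.ofReal ‖x + h + y‖)⁻¹ ∂ν ≤ B := by
    have e : ∀ x : EuclideanSpace ℝ (Fin p), x - -(h + y) = x + h + y := fun x => by abel
    have := hJ (-(h + y))
    simp_rw [e] at this
    exact this
  have hJ2 : ∫⁻ x, (ENNReal.ofReal ‖x + h - y‖)⁻¹ ∂ν ≤ B := by
    have e : ∀ x : EuclideanSpace ℝ (Fin p), x - (y - h) = x + h - y := fun x => by abel
    have := hJ (y - h)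
    simp_rw [e] at this
    exact this
  have hBt : (0:ℝ) ≤ B.toReal := ENNReal.toReal_nonneg
  calc ∫⁻ x, ENNReal.ofReal (Real.exp |Real.log ‖x + h + y‖ - Real.log ‖x + h - y‖|) ∂ν
      ≤ ∫⁻ x, (1 + ENNReal.ofReal (2 * ‖y‖) *
          ((ENNReal.ofReal ‖x + h + y‖)⁻¹ + (ENNReal.ofReal ‖x + h - y‖)⁻¹)) ∂ν :=
        lintegral_mono hpt
    _ = 1 + ENNReal.ofReal (2 * ‖y‖) *
          (∫⁻ x, (ENNReal.ofReal ‖x + h + y‖)⁻¹ ∂ν + ∫⁻ x, (ENNReal.ofReal ‖x + h - y‖)⁻¹ ∂ν) := by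
        rw [lintegral_add_left measurable_const, hmass,
          lintegral_const_mul' _ _ ENNReal.ofReal_ne_top, lintegral_add_left hg1]
    _ ≤ 1 + ENNReal.ofReal (2 * ‖y‖) * (B + B) := by gcongr
    _ = ENNReal.ofReal (1 + 2 * ‖y‖ * (B.toReal + B.toReal)) := by
        rw [ENNReal.ofReal_add (by norm_num : (0:ℝ) ≤ 1) (by positivity), ENNReal.ofReal_one,
          ENNReal.ofReal_mul (by positivity : (0:ℝ) ≤ 2 * ‖y‖), ENNReal.ofReal_add hBt hBt,
          ENNReal.ofReal_toReal hBne]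
    _ ≤ ENNReal.ofReal (Real.exp (4 * B.toReal * ‖y‖)) := by
        apply ENNReal.ofReal_le_ofReal
        have hle := Real.add_one_le_exp (4 * B.toReal * ‖y‖)
        nlinarith [norm_nonneg y]
end

section
/- Let K₁, K₂ ⊆ ℝ² be closed cones with K₁ ∩ K₂ = {0}. Then for every α > 6, ∫_{K₁} √( ∫_{K₂} (1+|t−s|)^{−α} ds ) dt < ∞, where both integrals are with respect to Lebesgue measure on ℝ². -/
open MeasureTheory
open scoped ENNReal
set_option maxHeartbeats 1000000

local notation "E" => EuclideanSpace ℝ (Fin 2)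

/-- A closed cone in `ℝ²`: a closed set stable under multiplication by nonnegative scalars. -/
def IsClosedCone (K : Set (EuclideanSpace ℝ (Fin 2))) : Prop :=
  IsClosed K ∧ ∀ x ∈ K, ∀ l : ℝ, 0 ≤ l → l • x ∈ K

/-- Separation of two closed cones meeting only at 0. -/
lemma cone_sep (K₁ K₂ : Set E)
    (h₁c : IsClosed K₁) (h₁s : ∀ x ∈ K₁, ∀ l : ℝ, 0 ≤ l → l • x ∈ K₁)
    (h₂c : IsClosed K₂) (h₂s : ∀ x ∈ K₂, ∀ l : ℝ, 0 ≤ l → l • x ∈ K₂)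
    (hK : K₁ ∩ K₂ = {0}) :
    ∃ c : ℝ, 0 < c ∧ ∀ t ∈ K₁, ∀ s ∈ K₂, c * (‖t‖ + ‖s‖) ≤ ‖t - s‖ := by
  set S : Set (E × E) := {x | x.1 ∈ K₁ ∧ x.2 ∈ K₂ ∧ ‖x.1‖ + ‖x.2‖ = 1} with hSdef
  have key : ∀ t ∈ K₁, ∀ s ∈ K₂, ‖t‖ + ‖s‖ = 0 ∨ (((‖t‖+‖s‖)⁻¹ • t, (‖t‖+‖s‖)⁻¹ • s) ∈ S) := by
    intro t ht s hs
    rcases eq_or_lt_of_le (by positivity : (0:ℝ) ≤ ‖t‖ + ‖s‖) with h | h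
    · exact Or.inl h.symm
    · refine Or.inr ⟨h₁s t ht _ (by positivity), h₂s s hs _ (by positivity), ?_⟩
      rw [norm_smul, norm_smul]
      have : |(‖t‖+‖s‖)⁻¹| = (‖t‖+‖s‖)⁻¹ := abs_of_pos (by positivity)
      rw [Real.norm_eq_abs, this]
      field_simp
  by_cases hS : S.Nonempty
  · have hScl : IsClosed S := by
      have : S = (K₁ ×ˢ K₂) ∩ {x : E × E | ‖x.1‖ + ‖x.2‖ = 1} := by
        ext x; simp [hSdef, Set.mem_prod, and_assoc]
      rw [this]
      exact (h₁c.prod h₂c).inter (isClosed_eq (by fun_prop) continuous_const)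
    have hSb : Bornology.IsBounded S := by
      apply Bornology.IsBounded.subset (Metric.isBounded_closedBall (x := (0 : E × E)) (r := 1))
      intro x hx
      simp only [Metric.mem_closedBall, dist_zero_right, Prod.norm_def]
      apply max_le <;> nlinarith [norm_nonneg x.1, norm_nonneg x.2, hx.2.2]
    have hScpt : IsCompact S := Metric.isCompact_of_isClosed_isBounded hScl hSb
    obtain ⟨x₀, hx₀, hmin⟩ := hScpt.exists_isMinOn hS
      ((continuous_fst.sub continuous_snd).norm.continuousOn)
    have hc : 0 < ‖x₀.1 - x₀.2‖ := by
      rcases eq_or_lt_of_le (norm_nonneg (x₀.1 - x₀.2)) with h | h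
      · exfalso
        have heq : x₀.1 = x₀.2 := sub_eq_zero.mp (norm_eq_zero.mp h.symm)
        have h1 : x₀.1 ∈ K₁ ∩ K₂ := ⟨hx₀.1, heq ▸ hx₀.2.1⟩
        rw [hK, Set.mem_singleton_iff] at h1
        have h2 := hx₀.2.2
        rw [heq] at h1
        rw [heq, h1] at h2
        simp at h2
      · exact h
    refine ⟨‖x₀.1 - x₀.2‖, hc, fun t ht s hs => ?_⟩
    rcases key t ht s hs with h0 | hmem
    · rw [h0]; simp [norm_nonneg]
    · have h3 : ‖x₀.1 - x₀.2‖ ≤ ‖(‖t‖+‖s‖)⁻¹ • t - (‖t‖+‖s‖)⁻¹ • s‖ := by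
        have := isMinOn_iff.mp hmin ((‖t‖ + ‖s‖)⁻¹ • t, (‖t‖ + ‖s‖)⁻¹ • s) hmem
        simpa using this
      rw [← smul_sub, norm_smul, Real.norm_eq_abs] at h3
      have hr : 0 < ‖t‖ + ‖s‖ := by
        rcases eq_or_lt_of_le (by positivity : (0:ℝ) ≤ ‖t‖ + ‖s‖) with h | h
        · exfalso
          have ht0 : t = 0 := norm_eq_zero.mp (by nlinarith [norm_nonneg t, norm_nonneg s])
          have hs0 : s = 0 := norm_eq_zero.mp (by nlinarith [norm_nonneg t, norm_nonneg s])
          have h4 := hmem.2.2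
          simp [ht0, hs0] at h4
        · exact h
      rw [abs_of_pos (inv_pos.mpr hr)] at h3
      calc ‖x₀.1 - x₀.2‖ * (‖t‖ + ‖s‖) ≤ ((‖t‖+‖s‖)⁻¹ * ‖t - s‖) * (‖t‖ + ‖s‖) := by
            apply mul_le_mul_of_nonneg_right h3 hr.le
        _ = ‖t - s‖ := by
            rw [mul_comm ((‖t‖+‖s‖)⁻¹) ‖t - s‖, mul_assoc, inv_mul_cancel₀ hr.ne', mul_one]
  · refine ⟨1, one_pos, fun t ht s hs => ?_⟩
    rcases key t ht s hs with h0 | hmem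
    · have ht0 : t = 0 := norm_eq_zero.mp (by nlinarith [norm_nonneg t, norm_nonneg s])
      have hs0 : s = 0 := norm_eq_zero.mp (by nlinarith [norm_nonneg t, norm_nonneg s])
      simp [ht0, hs0]
    · exact absurd ⟨_, hmem⟩ hS

lemma fin_int (c q : ℝ) (hc : 0 < c) (hq : 2 < q) :
    ∫⁻ s : E, ENNReal.ofReal ((1 + c * ‖s‖) ^ (-q)) < ⊤ := by
  set m := min c 1 with hm
  have hm0 : 0 < m := lt_min hc one_pos
  have hbound : ∀ s : E, (1 + c * ‖s‖) ^ (-q) ≤ m ^ (-q) * (1 + ‖s‖) ^ (-q) := by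
    intro s
    have h1 : m * (1 + ‖s‖) ≤ 1 + c * ‖s‖ := by
      rcases min_cases c 1 with ⟨h, hcl⟩ | ⟨h, hcl⟩ <;> rw [hm, h] <;> nlinarith [norm_nonneg s]
    have h2 : (1 + c * ‖s‖) ^ (-q) ≤ (m * (1 + ‖s‖)) ^ (-q) :=
      Real.rpow_le_rpow_of_nonpos (by positivity) h1 (by linarith)
    rwa [Real.mul_rpow hm0.le (by positivity)] at h2
  calc ∫⁻ s : E, ENNReal.ofReal ((1 + c * ‖s‖) ^ (-q))
      ≤ ∫⁻ s : E, ENNReal.ofReal (m ^ (-q)) * ENNReal.ofReal ((1 + ‖s‖) ^ (-q)) := by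
        apply lintegral_mono; intro s
        dsimp only
        rw [← ENNReal.ofReal_mul (by positivity)]
        exact ENNReal.ofReal_le_ofReal (hbound s)
    _ = ENNReal.ofReal (m ^ (-q)) * ∫⁻ s : E, ENNReal.ofReal ((1 + ‖s‖) ^ (-q)) :=
        lintegral_const_mul' _ _ ENNReal.ofReal_ne_top
    _ < ⊤ := ENNReal.mul_lt_top ENNReal.ofReal_lt_top
        (finite_integral_one_add_norm (by simp; linarith))

/-- Let `K₁, K₂ ⊆ ℝ²` be closed cones with `K₁ ∩ K₂ = {0}`.  Then for every
`α > 6`, `∫_{K₁} √(∫_{K₂} (1+|t−s|)^{−α} ds) dt < ∞`. -/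
theorem stmt8 (K₁ K₂ : Set (EuclideanSpace ℝ (Fin 2)))
    (h₁ : IsClosedCone K₁) (h₂ : IsClosedCone K₂) (hK : K₁ ∩ K₂ = {0})
    (α : ℝ) (hα : 6 < α) :
    ∫⁻ t in K₁, (∫⁻ s in K₂, ENNReal.ofReal ((1 + ‖t - s‖) ^ (-α))) ^ (1 / 2 : ℝ) < ⊤ := by
  obtain ⟨c, hc, hsep⟩ := cone_sep K₁ K₂ h₁.1 h₁.2 h₂.1 h₂.2 hK
  set δ := (α - 6) / 3 with hδ
  set p := α - 2 - δ with hp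
  set q := (2 + δ : ℝ) with hq
  have hδ0 : 0 < δ := by rw [hδ]; linarith
  have hp4 : 4 < p := by rw [hp, hδ]; linarith
  have hq2 : 2 < q := by rw [hq]; linarith
  have hpq : -p + -q = -α := by rw [hp, hq]; ring
  have hpt : ∀ t ∈ K₁, ∀ s ∈ K₂,
      (1 + ‖t - s‖) ^ (-α) ≤ (1 + c * ‖t‖) ^ (-p) * (1 + c * ‖s‖) ^ (-q) := by
    intro t ht s hs
    have hsep' := hsep t ht s hs
    have h1 : (1 : ℝ) + c * ‖t‖ + c * ‖s‖ ≤ 1 + ‖t - s‖ := by nlinarith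
    have hta : (0:ℝ) ≤ c * ‖t‖ := by positivity
    have htb : (0:ℝ) ≤ c * ‖s‖ := by positivity
    have hM0 : (0:ℝ) < 1 + c * ‖t‖ + c * ‖s‖ := by linarith
    calc (1 + ‖t - s‖) ^ (-α) ≤ (1 + c * ‖t‖ + c * ‖s‖) ^ (-α) :=
          Real.rpow_le_rpow_of_nonpos hM0 h1 (by linarith)
      _ = (1 + c * ‖t‖ + c * ‖s‖) ^ (-p) * (1 + c * ‖t‖ + c * ‖s‖) ^ (-q) := by
          rw [← Real.rpow_add hM0, hpq]
      _ ≤ (1 + c * ‖t‖) ^ (-p) * (1 + c * ‖s‖) ^ (-q) := by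
          apply mul_le_mul
            (Real.rpow_le_rpow_of_nonpos (by linarith) (by linarith) (by linarith))
            (Real.rpow_le_rpow_of_nonpos (by linarith) (by linarith) (by linarith))
            (by positivity) (by positivity)
  set C := ∫⁻ s : E, ENNReal.ofReal ((1 + c * ‖s‖) ^ (-q)) with hC
  have hCfin : C < ⊤ := fin_int c q hc hq2
  have hinner : ∀ t ∈ K₁,
      (∫⁻ s in K₂, ENNReal.ofReal ((1 + ‖t - s‖) ^ (-α)))
        ≤ ENNReal.ofReal ((1 + c * ‖t‖) ^ (-p)) * C := by
    intro t ht
    calc ∫⁻ s in K₂, ENNReal.ofReal ((1 + ‖t - s‖) ^ (-α))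
        ≤ ∫⁻ s in K₂, ENNReal.ofReal ((1 + c * ‖t‖) ^ (-p)) *
            ENNReal.ofReal ((1 + c * ‖s‖) ^ (-q)) := by
          apply setLIntegral_mono' h₂.1.measurableSet
          intro s hs
          rw [← ENNReal.ofReal_mul (by positivity)]
          exact ENNReal.ofReal_le_ofReal (hpt t ht s hs)
      _ = ENNReal.ofReal ((1 + c * ‖t‖) ^ (-p)) *
            ∫⁻ s in K₂, ENNReal.ofReal ((1 + c * ‖s‖) ^ (-q)) :=
          lintegral_const_mul' _ _ ENNReal.ofReal_ne_top
      _ ≤ _ := mul_le_mul_right (setLIntegral_le_lintegral _ _) _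
  have hCne : C ^ (1/2 : ℝ) ≠ ⊤ := ENNReal.rpow_ne_top_of_nonneg (by norm_num) hCfin.ne
  calc ∫⁻ t in K₁, (∫⁻ s in K₂, ENNReal.ofReal ((1 + ‖t - s‖) ^ (-α))) ^ (1 / 2 : ℝ)
      ≤ ∫⁻ t in K₁, (ENNReal.ofReal ((1 + c * ‖t‖) ^ (-p)) * C) ^ (1 / 2 : ℝ) := by
        apply setLIntegral_mono' h₁.1.measurableSet
        intro t ht
        exact ENNReal.rpow_le_rpow (hinner t ht) (by norm_num)
    _ = ∫⁻ t in K₁, ENNReal.ofReal ((1 + c * ‖t‖) ^ (-(p/2))) * C ^ (1/2 : ℝ) := by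
        apply lintegral_congr
        intro t
        rw [ENNReal.mul_rpow_of_nonneg _ _ (by norm_num : (0:ℝ) ≤ 1/2),
          ENNReal.ofReal_rpow_of_nonneg (by positivity) (by norm_num),
          ← Real.rpow_mul (by positivity)]
        rw [show -p * (1/2 : ℝ) = -(p/2) by ring]
    _ = (∫⁻ t in K₁, ENNReal.ofReal ((1 + c * ‖t‖) ^ (-(p/2)))) * C ^ (1/2 : ℝ) :=
        lintegral_mul_const' _ _ hCne
    _ ≤ (∫⁻ t : E, ENNReal.ofReal ((1 + c * ‖t‖) ^ (-(p/2)))) * C ^ (1/2 : ℝ) :=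
        mul_le_mul_left (setLIntegral_le_lintegral _ _) _
    _ < ⊤ := ENNReal.mul_lt_top (fin_int c (p/2) hc (by linarith))
        (lt_top_iff_ne_top.mpr hCne)
end

section
/- Let K₁, K₂ ⊆ ℝ² be closed cones with K₁ ∩ K₂ = {0}, each of positive Lebesgue measure, and let 0 < α ≤ 6. Then ∫_{K₁} √( ∫_{K₂} (1+|t−s|)^{−α} ds ) dt = ∞, where both integrals are with respect to Lebesgue measure on ℝ². -/
open MeasureTheory
open scoped ENNReal Pointwise

lemma cone_inter_ball_eq (K : Set (EuclideanSpace ℝ (Fin 2)))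
    (hK : ∀ x ∈ K, ∀ l : ℝ, 0 ≤ l → l • x ∈ K) {r : ℝ} (hr : 0 < r) :
    K ∩ Metric.ball 0 r = r • (K ∩ Metric.ball 0 1) := by
  ext x
  simp only [Set.mem_inter_iff, Metric.mem_ball, dist_zero_right, Set.mem_smul_set]
  constructor
  · rintro ⟨hxK, hxn⟩
    refine ⟨r⁻¹ • x, ⟨hK x hxK r⁻¹ (by positivity), ?_⟩, ?_⟩
    · rw [norm_smul, norm_inv, Real.norm_eq_abs, abs_of_pos hr]
      rw [inv_mul_lt_iff₀ hr, mul_one]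
      exact hxn
    · rw [smul_smul, mul_inv_cancel₀ hr.ne', one_smul]
  · rintro ⟨y, ⟨hyK, hyn⟩, rfl⟩
    refine ⟨hK y hyK r hr.le, ?_⟩
    rw [norm_smul, Real.norm_eq_abs, abs_of_pos hr]
    nlinarith [norm_nonneg y]

lemma cone_ball_volume (K : Set (EuclideanSpace ℝ (Fin 2)))
    (hK : ∀ x ∈ K, ∀ l : ℝ, 0 ≤ l → l • x ∈ K) {r : ℝ} (hr : 0 < r) :
    volume (K ∩ Metric.ball 0 r)
      = ENNReal.ofReal (r ^ 2) * volume (K ∩ Metric.ball 0 1) := by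
  rw [cone_inter_ball_eq K hK hr, Measure.addHaar_smul_of_nonneg volume hr.le,
    finrank_euclideanSpace_fin]

lemma cone_ball_volume_pos (K : Set (EuclideanSpace ℝ (Fin 2)))
    (hK : ∀ x ∈ K, ∀ l : ℝ, 0 ≤ l → l • x ∈ K) (hm : 0 < volume K) :
    0 < volume (K ∩ Metric.ball 0 1) := by
  by_contra h
  push_neg at h
  have h0 : volume (K ∩ Metric.ball 0 1) = 0 := le_antisymm h zero_le'
  have hsub : K ⊆ ⋃ n : ℕ, K ∩ Metric.ball 0 ((n : ℝ) + 1) := by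
    intro x hx
    refine Set.mem_iUnion.2 ⟨⌊‖x‖⌋₊, hx, ?_⟩
    simp only [Metric.mem_ball, dist_zero_right]
    exact Nat.lt_floor_add_one _
  have hle : volume K ≤ ∑' n : ℕ, volume (K ∩ Metric.ball 0 ((n : ℝ) + 1)) :=
    (measure_mono hsub).trans (measure_iUnion_le _)
  have : ∀ n : ℕ, volume (K ∩ Metric.ball 0 ((n : ℝ) + 1)) = 0 := by
    intro n
    rw [cone_ball_volume K hK (by positivity), h0, mul_zero]
  simp only [this, tsum_zero] at hle
  exact absurd (le_antisymm hle zero_le') hm.ne'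

/-- Let `K₁, K₂ ⊆ ℝ²` be closed cones with `K₁ ∩ K₂ = {0}`, each of positive
Lebesgue measure, and let `0 < α ≤ 6`.  Then
`∫_{K₁} √(∫_{K₂} (1+|t−s|)^{−α} ds) dt = ∞`. -/
theorem stmt9 (K₁ K₂ : Set (EuclideanSpace ℝ (Fin 2)))
    (h₁ : IsClosedCone K₁) (h₂ : IsClosedCone K₂) (hK : K₁ ∩ K₂ = {0})
    (hm₁ : 0 < volume K₁) (hm₂ : 0 < volume K₂)
    (α : ℝ) (hα0 : 0 < α) (hα : α ≤ 6) :
    ∫⁻ t in K₁, (∫⁻ s in K₂, ENNReal.ofReal ((1 + ‖t - s‖) ^ (-α))) ^ (1 / 2 : ℝ) = ⊤ := by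
  obtain ⟨h₁c, h₁cone⟩ := h₁
  obtain ⟨h₂c, h₂cone⟩ := h₂
  set v₁ := volume (K₁ ∩ Metric.ball 0 1) with hv₁def
  set v₂ := volume (K₂ ∩ Metric.ball 0 1) with hv₂def
  have hv₁ : 0 < v₁ := cone_ball_volume_pos K₁ h₁cone hm₁
  have hv₂ : 0 < v₂ := cone_ball_volume_pos K₂ h₂cone hm₂
  have hv₁top : v₁ ≠ ⊤ :=
    ((measure_mono Set.inter_subset_right).trans_lt measure_ball_lt_top).ne
  set β : ℝ := (2 - α) / 2 with hβdef
  have hβ2 : -2 ≤ β := by rw [hβdef]; linarith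
  set d : ℝ≥0∞ := (ENNReal.ofReal (3 ^ (-α)) * v₂) ^ (1 / 2 : ℝ) with hddef
  have hd0 : d ≠ 0 := by
    rw [hddef]
    simp only [ne_eq, ENNReal.rpow_eq_zero_iff, not_or, not_and_or]
    constructor
    · left
      exact mul_ne_zero (by positivity) hv₂.ne'
    · right; norm_num
  -- pointwise lower bound on the integrand
  have key : ∀ t : EuclideanSpace ℝ (Fin 2), 1 ≤ ‖t‖ →
      d * ENNReal.ofReal (‖t‖ ^ β)
        ≤ (∫⁻ s in K₂, ENNReal.ofReal ((1 + ‖t - s‖) ^ (-α))) ^ (1 / 2 : ℝ) := by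
    intro t ht
    have ht0 : (0:ℝ) < ‖t‖ := lt_of_lt_of_le one_pos ht
    have hinner : ENNReal.ofReal ((3 * ‖t‖) ^ (-α)) * (ENNReal.ofReal (‖t‖ ^ 2) * v₂)
        ≤ ∫⁻ s in K₂, ENNReal.ofReal ((1 + ‖t - s‖) ^ (-α)) := by
      have hms : MeasurableSet (K₂ ∩ Metric.ball 0 ‖t‖) :=
        h₂c.measurableSet.inter measurableSet_ball
      calc ENNReal.ofReal ((3 * ‖t‖) ^ (-α)) * (ENNReal.ofReal (‖t‖ ^ 2) * v₂)
          = ∫⁻ _ in K₂ ∩ Metric.ball 0 ‖t‖, ENNReal.ofReal ((3 * ‖t‖) ^ (-α)) := by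
            rw [setLIntegral_const, cone_ball_volume K₂ h₂cone ht0]
        _ ≤ ∫⁻ s in K₂ ∩ Metric.ball 0 ‖t‖, ENNReal.ofReal ((1 + ‖t - s‖) ^ (-α)) := by
            refine setLIntegral_mono' hms fun s hs => ?_
            apply ENNReal.ofReal_le_ofReal
            apply Real.rpow_le_rpow_of_nonpos (by positivity) ?_ (by linarith)
            have hns : ‖s‖ < ‖t‖ := by
              simpa [dist_zero_right] using hs.2
            have := norm_sub_le t s
            linarith
        _ ≤ ∫⁻ s in K₂, ENNReal.ofReal ((1 + ‖t - s‖) ^ (-α)) :=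
            lintegral_mono_set Set.inter_subset_left
    have hre : (3 * ‖t‖) ^ (-α) * ‖t‖ ^ 2 = 3 ^ (-α) * ‖t‖ ^ (2 - α) := by
      rw [Real.mul_rpow (by norm_num) (norm_nonneg t),
        show (‖t‖:ℝ) ^ 2 = ‖t‖ ^ ((2:ℕ):ℝ) from (Real.rpow_natCast _ 2).symm,
        mul_assoc, ← Real.rpow_add ht0]
      congr 1
      push_cast
      ring
    have hexpand : ENNReal.ofReal ((3 * ‖t‖) ^ (-α)) * (ENNReal.ofReal (‖t‖ ^ 2) * v₂)
        = ENNReal.ofReal (3 ^ (-α)) * v₂ * ENNReal.ofReal (‖t‖ ^ (2 - α)) := by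
      rw [← mul_assoc, ← ENNReal.ofReal_mul (by positivity), hre,
        ENNReal.ofReal_mul (by positivity), mul_right_comm]
    calc d * ENNReal.ofReal (‖t‖ ^ β)
        = (ENNReal.ofReal (3 ^ (-α)) * v₂) ^ (1/2 : ℝ)
            * ENNReal.ofReal (‖t‖ ^ (2 - α)) ^ (1/2 : ℝ) := by
          rw [hddef]
          congr 1
          rw [ENNReal.ofReal_rpow_of_nonneg (by positivity) (by norm_num),
            ← Real.rpow_mul (norm_nonneg t)]
          congr 1
          rw [hβdef]; ring
      _ = (ENNReal.ofReal (3 ^ (-α)) * v₂ * ENNReal.ofReal (‖t‖ ^ (2 - α))) ^ (1/2 : ℝ) :=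
          (ENNReal.mul_rpow_of_nonneg _ _ (by norm_num)).symm
      _ = (ENNReal.ofReal ((3 * ‖t‖) ^ (-α)) * (ENNReal.ofReal (‖t‖ ^ 2) * v₂)) ^ (1/2 : ℝ) := by
          rw [hexpand]
      _ ≤ _ := ENNReal.rpow_le_rpow hinner (by norm_num)
  -- the dyadic annuli inside K₁
  set A : ℕ → Set (EuclideanSpace ℝ (Fin 2)) :=
    fun n => K₁ ∩ (Metric.ball 0 ((2:ℝ) ^ (n+1)) \ Metric.ball 0 ((2:ℝ) ^ n)) with hAdef
  have hAmeas : ∀ n, MeasurableSet (A n) :=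
    fun n => h₁c.measurableSet.inter (measurableSet_ball.diff measurableSet_ball)
  have hAdisj : Pairwise (Function.onFun Disjoint A) := by
    have haux : ∀ m n : ℕ, m < n → Disjoint (A m) (A n) := by
      intro m n hmn
      rw [Set.disjoint_left]
      rintro x ⟨-, hxm, -⟩ ⟨-, -, hxn⟩
      simp only [Metric.mem_ball, dist_zero_right, not_lt] at hxm hxn
      have h1 : (2:ℝ) ^ (m+1) ≤ 2 ^ n := by
        apply pow_le_pow_right₀ one_le_two hmn
      linarith
    intro m n hmn
    rcases hmn.lt_or_gt with h | h
    · exact haux m n h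
    · exact (haux n m h).symm
  have hAvol : ∀ n : ℕ, ENNReal.ofReal (3 * 4 ^ n) * v₁ ≤ volume (A n) := by
    intro n
    have hEq : A n = (K₁ ∩ Metric.ball 0 ((2:ℝ) ^ (n+1))) \ (K₁ ∩ Metric.ball 0 ((2:ℝ) ^ n)) := by
      rw [hAdef]
      ext x
      simp only [Set.mem_inter_iff, Set.mem_diff]
      tauto
    have hsub : K₁ ∩ Metric.ball 0 ((2:ℝ) ^ n) ⊆ K₁ ∩ Metric.ball 0 ((2:ℝ) ^ (n+1)) := by
      apply Set.inter_subset_inter_right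
      exact Metric.ball_subset_ball (by apply pow_le_pow_right₀ one_le_two; omega)
    have hfin : volume (K₁ ∩ Metric.ball 0 ((2:ℝ) ^ n)) ≠ ⊤ :=
      ((measure_mono Set.inter_subset_right).trans_lt measure_ball_lt_top).ne
    rw [hEq, measure_diff hsub
        (h₁c.measurableSet.inter measurableSet_ball).nullMeasurableSet hfin,
      cone_ball_volume K₁ h₁cone (r := (2:ℝ)^(n+1)) (by positivity),
      cone_ball_volume K₁ h₁cone (r := (2:ℝ)^n) (by positivity), ← hv₁def,
      ← ENNReal.sub_mul (fun _ _ => hv₁top),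
      ← ENNReal.ofReal_sub _ (by positivity)]
    apply le_of_eq
    congr 2
    rw [show (4:ℝ) = 2^2 by norm_num, ← pow_mul]
    ring
  have hAnorm : ∀ n : ℕ, ∀ t ∈ A n,
      (2:ℝ) ^ n ≤ ‖t‖ ∧ ‖t‖ ≤ (2:ℝ) ^ (n+1) := by
    rintro n t ⟨-, htu, htl⟩
    simp only [Metric.mem_ball, dist_zero_right, not_lt] at htu htl
    exact ⟨htl, htu.le⟩
  -- lower bound for the integral over each annulus
  have hAint : ∀ n : ℕ,
      d * ENNReal.ofReal (3/4) * v₁ ≤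
        ∫⁻ t in A n, (∫⁻ s in K₂, ENNReal.ofReal ((1 + ‖t - s‖) ^ (-α))) ^ (1 / 2 : ℝ) := by
    intro n
    have hpow : ∀ t ∈ A n, (2:ℝ) ^ ((n:ℝ) * β) / 4 ≤ ‖t‖ ^ β := by
      intro t htA
      obtain ⟨hl, hu⟩ := hAnorm n t htA
      have h2n : ((2:ℝ) ^ n : ℝ) = (2:ℝ) ^ ((n:ℝ)) := (Real.rpow_natCast 2 n).symm
      have h2n1 : ((2:ℝ) ^ (n+1) : ℝ) = (2:ℝ) ^ (((n:ℝ)+1)) := by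
        rw [← Real.rpow_natCast 2 (n+1)]; push_cast; ring_nf
      have ht0 : (0:ℝ) < ‖t‖ := lt_of_lt_of_le (by positivity) hl
      rcases le_or_gt 0 β with hβ | hβ
      · have : (2:ℝ) ^ ((n:ℝ) * β) ≤ ‖t‖ ^ β := by
          calc (2:ℝ) ^ ((n:ℝ) * β) = ((2:ℝ) ^ ((n:ℝ))) ^ β := Real.rpow_mul (by norm_num) _ _
            _ ≤ ‖t‖ ^ β := by
              apply Real.rpow_le_rpow (by positivity) _ hβ
              rw [← h2n]; exact hl
        nlinarith [Real.rpow_pos_of_pos (show (0:ℝ) < 2 by norm_num) ((n:ℝ) * β)]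
      · have h1 : ‖t‖ ^ β ≥ ((2:ℝ) ^ (((n:ℝ)+1))) ^ β := by
          apply Real.rpow_le_rpow_of_nonpos ht0 _ hβ.le
          rw [← h2n1]; exact hu
        have h2 : ((2:ℝ) ^ (((n:ℝ)+1))) ^ β = (2:ℝ) ^ ((n:ℝ) * β) * (2:ℝ) ^ β := by
          rw [← Real.rpow_mul (by norm_num), ← Real.rpow_add (by norm_num)]
          congr 1; ring
        have h3 : (1:ℝ)/4 ≤ (2:ℝ) ^ β := by
          have : (2:ℝ) ^ (-2:ℝ) ≤ (2:ℝ) ^ β :=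
            Real.rpow_le_rpow_of_exponent_le one_le_two hβ2
          have h4 : (2:ℝ) ^ (-2:ℝ) = 1/4 := by
            rw [show (-2:ℝ) = ((-2:ℤ):ℝ) by norm_num, Real.rpow_intCast]
            norm_num
          rw [h4] at this
          exact this
        have hp : (0:ℝ) < (2:ℝ) ^ ((n:ℝ) * β) := Real.rpow_pos_of_pos (by norm_num) _
        nlinarith
    calc d * ENNReal.ofReal (3/4) * v₁
        ≤ d * ENNReal.ofReal ((2:ℝ) ^ ((n:ℝ) * β) / 4) * (ENNReal.ofReal (3 * 4 ^ n) * v₁) := by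
          rw [mul_assoc d, mul_assoc d, ← mul_assoc (ENNReal.ofReal _), ← ENNReal.ofReal_mul]
          · apply mul_le_mul_right
            apply mul_le_mul_left
            apply ENNReal.ofReal_le_ofReal
            have h4n : ((4:ℝ) ^ n : ℝ) = (2:ℝ) ^ ((2:ℝ) * n) := by
              rw [show ((4:ℝ) ^ n : ℝ) = ((2:ℝ)^2) ^ n by norm_num, ← pow_mul,
                ← Real.rpow_natCast 2 (2*n)]
              push_cast; ring_nf
            have : (1:ℝ) ≤ (2:ℝ) ^ ((n:ℝ) * β) * (4:ℝ) ^ n := by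
              rw [h4n, ← Real.rpow_add (by norm_num)]
              rw [show (1:ℝ) = (2:ℝ) ^ (0:ℝ) by rw [Real.rpow_zero]]
              apply Real.rpow_le_rpow_of_exponent_le one_le_two
              nlinarith [Nat.cast_nonneg (α := ℝ) n]
            nlinarith [Real.rpow_pos_of_pos (show (0:ℝ) < 2 by norm_num) ((n:ℝ) * β)]
          · positivity
      _ ≤ d * ENNReal.ofReal ((2:ℝ) ^ ((n:ℝ) * β) / 4) * volume (A n) := by
          exact mul_le_mul_right (hAvol n) _
      _ = ∫⁻ _ in A n, d * ENNReal.ofReal ((2:ℝ) ^ ((n:ℝ) * β) / 4) := by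
          rw [setLIntegral_const]
      _ ≤ ∫⁻ t in A n, (∫⁻ s in K₂, ENNReal.ofReal ((1 + ‖t - s‖) ^ (-α))) ^ (1 / 2 : ℝ) := by
          refine setLIntegral_mono' (hAmeas n) fun t htA => ?_
          obtain ⟨hl, _⟩ := hAnorm n t htA
          have ht1 : (1:ℝ) ≤ ‖t‖ := le_trans (one_le_pow₀ one_le_two) hl
          refine le_trans ?_ (key t ht1)
          apply mul_le_mul_right
          exact ENNReal.ofReal_le_ofReal (hpow t htA)
  -- put everything together
  rw [eq_top_iff]
  calc (⊤ : ℝ≥0∞) = ∑' _ : ℕ, d * ENNReal.ofReal (3/4) * v₁ := by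
        rw [ENNReal.tsum_const_eq_top_of_ne_zero]
        apply mul_ne_zero (mul_ne_zero hd0 _) hv₁.ne'
        simp
    _ ≤ ∑' n : ℕ, ∫⁻ t in A n, (∫⁻ s in K₂, ENNReal.ofReal ((1 + ‖t - s‖) ^ (-α))) ^ (1/2 : ℝ) :=
        ENNReal.tsum_le_tsum hAint
    _ = ∫⁻ t in ⋃ n, A n, (∫⁻ s in K₂, ENNReal.ofReal ((1 + ‖t - s‖) ^ (-α))) ^ (1/2 : ℝ) :=
        (lintegral_iUnion hAmeas hAdisj _).symm
    _ ≤ ∫⁻ t in K₁, (∫⁻ s in K₂, ENNReal.ofReal ((1 + ‖t - s‖) ^ (-α))) ^ (1/2 : ℝ) := by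
        apply lintegral_mono_set
        exact Set.iUnion_subset fun n => Set.inter_subset_left
end
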